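/- arXiv:2601.12210 — 4 statements merged into one kernel-verified Lean document; each statement's English description precedes it below -/
import Mathlib

section
/- For the cascade system with A = [[-a₁,0,0],[g₁,-a₂,0],[0,g₂,-a₃]] (distinct aᵢ > 0, g₁,g₂ > 0), B = (1,0,0)ᵀ, C = (0,0,1), the impulse response g(t) = C e^{tA} B attains its maximum on [0,∞) at a unique point t* ∈ (0,∞); g is strictly increasing on [0,t*) and strictly decreasing on (t*,∞). -/
open Matrix Set Filter Topology

noncomputable def Acas (a₁ a₂ a₃ g₁ g₂ : ℝ) : Matrix (Fin 3) (Fin 3) ℝ :=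
  !![-a₁, 0, 0; g₁, -a₂, 0; 0, g₂, -a₃]

def Bcas : Fin 3 → ℝ := ![1, 0, 0]

/-- impulse response g(t) = C e^{tA} B with C = (0,0,1) -/
noncomputable def impResp (a₁ a₂ a₃ g₁ g₂ : ℝ) (t : ℝ) : ℝ :=
  ((NormedSpace.exp (t • Acas a₁ a₂ a₃ g₁ g₂)) *ᵥ Bcas) 2

/-- z(τ,T) = C e^{Aτ} (I - e^{AT})⁻¹ B -/
noncomputable def zfun (a₁ a₂ a₃ g₁ g₂ : ℝ) (τ T : ℝ) : ℝ :=
  ((NormedSpace.exp (τ • Acas a₁ a₂ a₃ g₁ g₂) *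
    (1 - NormedSpace.exp (T • Acas a₁ a₂ a₃ g₁ g₂))⁻¹) *ᵥ Bcas) 2

noncomputable def zmaxF (a₁ a₂ a₃ g₁ g₂ T : ℝ) : ℝ :=
  sSup ((fun τ => zfun a₁ a₂ a₃ g₁ g₂ τ T) '' Set.Icc 0 T)

noncomputable def zminF (a₁ a₂ a₃ g₁ g₂ T : ℝ) : ℝ :=
  sInf ((fun τ => zfun a₁ a₂ a₃ g₁ g₂ τ T) '' Set.Icc 0 T)

set_option maxHeartbeats 2000000 in
lemma impResp_eq (a₁ a₂ a₃ g₁ g₂ : ℝ)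
    (h12 : a₁ ≠ a₂) (h13 : a₁ ≠ a₃) (h23 : a₂ ≠ a₃) (t : ℝ) :
    impResp a₁ a₂ a₃ g₁ g₂ t =
      g₁*g₂/((a₂-a₁)*(a₃-a₁)) * Real.exp (-a₁*t)
      + (-(g₁*g₂)/((a₂-a₁)*(a₃-a₂))) * Real.exp (-a₂*t)
      + g₁*g₂/((a₃-a₁)*(a₃-a₂)) * Real.exp (-a₃*t) := by
  have hα : a₂ - a₁ ≠ 0 := sub_ne_zero.mpr (Ne.symm h12)
  have hβ : a₃ - a₁ ≠ 0 := sub_ne_zero.mpr (Ne.symm h13)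
  have hγ : a₃ - a₂ ≠ 0 := sub_ne_zero.mpr (Ne.symm h23)
  set α := a₂ - a₁
  set β := a₃ - a₁
  set γ := a₃ - a₂
  set P : Matrix (Fin 3) (Fin 3) ℝ := !![1,0,0; g₁/α,1,0; g₁*g₂/(α*β), g₂/γ, 1] with hP
  set Q : Matrix (Fin 3) (Fin 3) ℝ := !![1,0,0; -(g₁/α),1,0; g₁*g₂/(β*γ), -(g₂/γ), 1] with hQ
  have hPQ : P * Q = 1 := by
    ext i j
    fin_cases i <;> fin_cases j <;>
      simp [hP, hQ, Matrix.mul_apply, Fin.sum_univ_succ] <;> field_simp <;> ring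
  have hQP : Q * P = 1 := by
    ext i j
    fin_cases i <;> fin_cases j <;>
      simp [hP, hQ, Matrix.mul_apply, Fin.sum_univ_succ] <;> field_simp <;> ring
  set U : (Matrix (Fin 3) (Fin 3) ℝ)ˣ := ⟨P, Q, hPQ, hQP⟩ with hU
  have hDex : (Matrix.diagonal ![-(a₁*t),-(a₂*t),-(a₃*t)] : Matrix (Fin 3) (Fin 3) ℝ)
      = !![-(a₁*t),0,0; 0,-(a₂*t),0; 0,0,-(a₃*t)] := by
    ext i j
    fin_cases i <;> fin_cases j <;> simp [Matrix.diagonal_apply, Matrix.vecHead, Matrix.vecTail]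
  have key : NormedSpace.exp (t • Acas a₁ a₂ a₃ g₁ g₂) =
      P * !![Real.exp (-(a₁*t)),0,0; 0,Real.exp (-(a₂*t)),0; 0,0,Real.exp (-(a₃*t))] * Q := by
    have hA : t • Acas a₁ a₂ a₃ g₁ g₂ =
        (U : Matrix (Fin 3) (Fin 3) ℝ) *
          (Matrix.diagonal ![-(a₁*t),-(a₂*t),-(a₃*t)] : Matrix (Fin 3) (Fin 3) ℝ) *
          ((U⁻¹ : (Matrix (Fin 3) (Fin 3) ℝ)ˣ) : Matrix (Fin 3) (Fin 3) ℝ) := by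
      show t • Acas a₁ a₂ a₃ g₁ g₂ =
        P * (Matrix.diagonal ![-(a₁*t),-(a₂*t),-(a₃*t)] : Matrix (Fin 3) (Fin 3) ℝ) * Q
      rw [hDex]
      ext i j
      fin_cases i <;> fin_cases j <;>
        simp [hP, hQ, Acas, Matrix.mul_apply, Fin.sum_univ_succ, Matrix.smul_apply] <;>
        (try field_simp) <;> (try ring)
    have hE : (Matrix.diagonal (NormedSpace.exp ![-(a₁*t),-(a₂*t),-(a₃*t)]) : Matrix (Fin 3) (Fin 3) ℝ)
        = !![Real.exp (-(a₁*t)),0,0; 0,Real.exp (-(a₂*t)),0; 0,0,Real.exp (-(a₃*t))] := by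
      ext i j
      fin_cases i <;> fin_cases j <;>
        simp [Matrix.diagonal_apply, Pi.exp_def, ← Real.exp_eq_exp_ℝ, Matrix.vecHead,
          Matrix.vecTail]
    rw [hA, Matrix.exp_units_conj, Matrix.exp_diagonal, hE]
    rfl
  have hMB : ∀ M : Matrix (Fin 3) (Fin 3) ℝ, (M *ᵥ Bcas) 2 = M 2 0 := by
    intro M
    simp [Matrix.mulVec, dotProduct, Bcas, Fin.sum_univ_succ]
  rw [impResp, hMB, key]
  have expand : (P * !![Real.exp (-(a₁*t)),0,0; 0,Real.exp (-(a₂*t)),0;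
      0,0,Real.exp (-(a₃*t))] * Q) 2 0
      = g₁*g₂/(α*β) * Real.exp (-(a₁*t)) + (g₂/γ) * (-(g₁/α)) * Real.exp (-(a₂*t))
        + g₁*g₂/(β*γ) * Real.exp (-(a₃*t)) := by
    simp [hP, hQ, Matrix.mul_apply, Fin.sum_univ_succ]
    ring
  rw [expand]
  have e1 : -a₁*t = -(a₁*t) := by ring
  have e2 : -a₂*t = -(a₂*t) := by ring
  have e3 : -a₃*t = -(a₃*t) := by ring
  rw [e1, e2, e3]
  field_simp

lemma expsum_hasDerivAt (d₁ d₂ d₃ b₁ b₂ b₃ : ℝ) (x : ℝ) :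
    HasDerivAt (fun y => d₁ * Real.exp (b₁*y) + d₂ * Real.exp (b₂*y) + d₃ * Real.exp (b₃*y))
      (d₁*b₁ * Real.exp (b₁*x) + d₂*b₂ * Real.exp (b₂*x) + d₃*b₃ * Real.exp (b₃*x)) x := by
  have h : ∀ d b : ℝ, HasDerivAt (fun y => d * Real.exp (b*y)) (d*b*Real.exp (b*x)) x := by
    intro d b
    have h1 : HasDerivAt (fun y : ℝ => b*y) b x := by
      simpa using (hasDerivAt_id x).const_mul b
    have h2 := ((Real.hasDerivAt_exp (b*x)).comp x h1).const_mul d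
    exact h2.congr_deriv (by ring)
  exact ((h d₁ b₁).add (h d₂ b₂)).add (h d₃ b₃)

lemma two_exp_zero {b₁ b₂ d₁ d₂ s t : ℝ} (hb : b₁ ≠ b₂) (hd : d₁ ≠ 0)
    (hs : d₁ * Real.exp (b₁*s) + d₂ * Real.exp (b₂*s) = 0)
    (ht : d₁ * Real.exp (b₁*t) + d₂ * Real.exp (b₂*t) = 0) : s = t := by
  have key : ∀ u : ℝ, d₁ * Real.exp (b₁*u) + d₂ * Real.exp (b₂*u) = 0 →
      d₁ * Real.exp ((b₁ - b₂)*u) = -d₂ := by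
    intro u hu
    have h1 : d₁ * Real.exp (b₁*u) = -d₂ * Real.exp (b₂*u) := by linarith
    have h2 : Real.exp ((b₁-b₂)*u) * Real.exp (b₂*u) = Real.exp (b₁*u) := by
      rw [← Real.exp_add]; ring_nf
    have h3 : d₁ * (Real.exp ((b₁-b₂)*u) * Real.exp (b₂*u)) = -d₂ * Real.exp (b₂*u) := by
      rw [h2]; exact h1
    have := mul_right_cancel₀ (Real.exp_ne_zero (b₂*u)) (by linarith [h3] : d₁ * Real.exp ((b₁-b₂)*u) * Real.exp (b₂*u) = -d₂ * Real.exp (b₂*u))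
    exact this
  have h4 : Real.exp ((b₁-b₂)*s) = Real.exp ((b₁-b₂)*t) :=
    mul_left_cancel₀ hd (by rw [key s hs, key t ht])
  have h5 : (b₁-b₂)*s = (b₁-b₂)*t := Real.exp_injective h4
  exact mul_left_cancel₀ (sub_ne_zero.mpr hb) h5

lemma three_exp_zero_sorted {b₁ b₂ b₃ d₁ d₂ d₃ s t u : ℝ}
    (h12 : b₁ ≠ b₂) (h13 : b₁ ≠ b₃) (h23 : b₂ ≠ b₃)
    (hd₁ : d₁ ≠ 0) (hd₂ : d₂ ≠ 0)
    (hst : s < t) (htu : t < u)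
    (hs : d₁ * Real.exp (b₁*s) + d₂ * Real.exp (b₂*s) + d₃ * Real.exp (b₃*s) = 0)
    (ht : d₁ * Real.exp (b₁*t) + d₂ * Real.exp (b₂*t) + d₃ * Real.exp (b₃*t) = 0)
    (hu : d₁ * Real.exp (b₁*u) + d₂ * Real.exp (b₂*u) + d₃ * Real.exp (b₃*u) = 0) : False := by
  set G : ℝ → ℝ := fun x => d₁ * Real.exp ((b₁-b₃)*x) + d₂ * Real.exp ((b₂-b₃)*x) + d₃ with hG
  have hGzero : ∀ x : ℝ, d₁ * Real.exp (b₁*x) + d₂ * Real.exp (b₂*x) + d₃ * Real.exp (b₃*x) = 0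
      → G x = 0 := by
    intro x hx
    have hsplit : ∀ b : ℝ, Real.exp ((b-b₃)*x) = Real.exp (b*x) * Real.exp (-(b₃*x)) := by
      intro b; rw [← Real.exp_add]; ring_nf
    have hmul : G x * Real.exp (b₃*x)
        = d₁ * Real.exp (b₁*x) + d₂ * Real.exp (b₂*x) + d₃ * Real.exp (b₃*x) := by
      simp only [hG]
      rw [add_mul, add_mul, mul_assoc, mul_assoc, ← Real.exp_add, ← Real.exp_add]
      ring_nf
    have h0 : G x * Real.exp (b₃*x) = 0 := hmul.trans hx
    exact (mul_eq_zero.mp h0).resolve_right (Real.exp_ne_zero _)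
  have hG' : ∀ x : ℝ, HasDerivAt G
      (d₁*(b₁-b₃) * Real.exp ((b₁-b₃)*x) + d₂*(b₂-b₃) * Real.exp ((b₂-b₃)*x)) x := by
    intro x
    have := expsum_hasDerivAt d₁ d₂ d₃ (b₁-b₃) (b₂-b₃) 0 x
    simp only [zero_mul, Real.exp_zero, mul_one, mul_zero, add_zero] at this
    exact this
  have hcont : ∀ a b : ℝ, ContinuousOn G (Icc a b) := fun a b =>
    (fun x _ => (hG' x).continuousAt.continuousWithinAt)
  obtain ⟨p, hp, hp0⟩ := exists_hasDerivAt_eq_zero hst (hcont s t)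
    (by rw [hGzero s hs, hGzero t ht]) (fun x _ => hG' x)
  obtain ⟨q, hq, hq0⟩ := exists_hasDerivAt_eq_zero htu (hcont t u)
    (by rw [hGzero t ht, hGzero u hu]) (fun x _ => hG' x)
  have hbb : b₁ - b₃ ≠ b₂ - b₃ := fun h => h12 (by linarith [sub_left_injective.eq_iff.mp h])
  have hdd : d₁*(b₁-b₃) ≠ 0 := mul_ne_zero hd₁ (sub_ne_zero.mpr h13)
  have hpq : p = q := two_exp_zero hbb hdd hp0 hq0
  have : p < q := lt_trans hp.2 hq.1
  linarith

lemma unimodal_aux {a₁ a₂ a₃ c₁ c₂ c₃ : ℝ} {F : ℝ → ℝ}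
    (ha₁ : 0 < a₁) (ha₂ : 0 < a₂) (ha₃ : 0 < a₃)
    (h12 : a₁ ≠ a₂) (h13 : a₁ ≠ a₃) (h23 : a₂ ≠ a₃)
    (hc₁ : c₁ ≠ 0) (hc₂ : c₂ ≠ 0) (hc₃ : c₃ ≠ 0)
    (hsum0 : c₁ + c₂ + c₃ = 0)
    (hsum1 : c₁*a₁ + c₂*a₂ + c₃*a₃ = 0)
    (hsum2 : 0 < c₁*a₁^2 + c₂*a₂^2 + c₃*a₃^2)
    (hF : ∀ t, F t = c₁ * Real.exp (-a₁*t) + c₂ * Real.exp (-a₂*t) + c₃ * Real.exp (-a₃*t)) :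
    ∃ tstar : ℝ, 0 < tstar ∧
      (∀ t ∈ Set.Ici (0:ℝ), F t ≤ F tstar) ∧
      StrictMonoOn F (Set.Icc 0 tstar) ∧
      StrictAntiOn F (Set.Ici tstar) ∧
      (∀ t ∈ Set.Ici (0:ℝ), (∀ s ∈ Set.Ici (0:ℝ), F s ≤ F t) → t = tstar) := by
  have hFfun : F = fun t => c₁ * Real.exp (-a₁*t) + c₂ * Real.exp (-a₂*t) + c₃ * Real.exp (-a₃*t) :=
    funext hF
  set fd : ℝ → ℝ := fun t => c₁*(-a₁) * Real.exp (-a₁*t) + c₂*(-a₂) * Real.exp (-a₂*t)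
      + c₃*(-a₃) * Real.exp (-a₃*t) with hfd
  have hderiv : ∀ t, HasDerivAt F (fd t) t := by
    intro t; rw [hFfun]
    have h := expsum_hasDerivAt c₁ c₂ c₃ (-a₁) (-a₂) (-a₃) t
    exact h
  have hcont : Continuous F := by
    rw [hFfun]; fun_prop
  have hfdcont : Continuous fd := by
    rw [hfd]; fun_prop
  have hF0 : F 0 = 0 := by rw [hF]; simp; linarith
  have hfd0 : fd 0 = 0 := by rw [hfd]; simp; linarith
  have hd20 : HasDerivAt fd (c₁*a₁^2 + c₂*a₂^2 + c₃*a₃^2) 0 := by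
    have h := expsum_hasDerivAt (c₁*(-a₁)) (c₂*(-a₂)) (c₃*(-a₃)) (-a₁) (-a₂) (-a₃) 0
    convert h using 1
    simp; ring
  -- at most two zeros of fd
  have hatmost : ∀ x y z : ℝ, x < y → y < z → fd x = 0 → fd y = 0 → fd z = 0 → False := by
    intro x y z hxy hyz hx hy hz
    have hb12 : (-a₁ : ℝ) ≠ -a₂ := fun h => h12 (neg_injective h)
    have hb13 : (-a₁ : ℝ) ≠ -a₃ := fun h => h13 (neg_injective h)
    have hb23 : (-a₂ : ℝ) ≠ -a₃ := fun h => h23 (neg_injective h)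
    have hd1 : c₁*(-a₁) ≠ 0 := mul_ne_zero hc₁ (neg_ne_zero.mpr ha₁.ne')
    have hd2 : c₂*(-a₂) ≠ 0 := mul_ne_zero hc₂ (neg_ne_zero.mpr ha₂.ne')
    exact three_exp_zero_sorted hb12 hb13 hb23 hd1 hd2 hxy hyz hx hy hz
  -- fd positive just right of 0
  have hslope : Tendsto (slope fd 0) (𝓝[>] 0) (𝓝 (c₁*a₁^2 + c₂*a₂^2 + c₃*a₃^2)) :=
    (hasDerivAt_iff_tendsto_slope.mp hd20).mono_left
      (nhdsWithin_mono _ (fun x hx => ne_of_gt hx))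
  have hev : ∀ᶠ x in 𝓝[>] (0:ℝ), 0 < fd x := by
    filter_upwards [hslope.eventually (lt_mem_nhds hsum2), self_mem_nhdsWithin] with x hx hx0
    have hx0' : (0:ℝ) < x := hx0
    have hsl : slope fd 0 x = fd x / x := by
      rw [slope_def_field]; rw [hfd0]; ring
    rw [hsl] at hx
    have := mul_pos hx hx0'
    rwa [div_mul_cancel₀ _ (ne_of_gt hx0')] at this
  obtain ⟨δ, hδmem, hδ⟩ := mem_nhdsGT_iff_exists_Ioo_subset.mp hev
  have hδpos : 0 < δ := hδmem
  -- F positive at p := δ/2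
  set p : ℝ := δ/2 with hpdef
  have hppos : 0 < p := by positivity
  have hplt : p < δ := by rw [hpdef]; linarith
  have hmono0 : StrictMonoOn F (Set.Icc 0 p) := by
    apply strictMonoOn_of_hasDerivWithinAt_pos (convex_Icc 0 p) hcont.continuousOn
      (fun x hx => (hderiv x).hasDerivWithinAt)
    intro x hx
    rw [interior_Icc] at hx
    exact hδ ⟨hx.1, lt_trans hx.2 hplt⟩
  have hFp : 0 < F p := by
    have := hmono0 (left_mem_Icc.mpr hppos.le) ⟨hppos.le, le_refl p⟩ hppos
    rwa [hF0] at this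
  -- F tends to 0 at infinity
  have htends : Tendsto F atTop (𝓝 0) := by
    rw [hFfun]
    have hterm : ∀ c a : ℝ, 0 < a →
        Tendsto (fun t => c * Real.exp (-a*t)) atTop (𝓝 0) := by
      intro c a ha
      have h1 : Tendsto (fun t : ℝ => a*t) atTop atTop :=
        tendsto_id.const_mul_atTop ha
      have h2 : Tendsto (fun t : ℝ => -a*t) atTop atBot := by
        have := tendsto_neg_atTop_atBot.comp h1
        simpa [Function.comp_def, neg_mul] using this
      have h3 := Real.tendsto_exp_atBot.comp h2
      have h4 := h3.const_mul c
      simpa using h4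
    have := ((hterm c₁ a₁ ha₁).add (hterm c₂ a₂ ha₂)).add (hterm c₃ a₃ ha₃)
    simpa using this
  obtain ⟨R0, hR0⟩ := eventually_atTop.mp (htends.eventually (gt_mem_nhds hFp))
  set R : ℝ := max R0 (p+1) with hRdef
  have hpR : p ∈ Set.Icc (0:ℝ) R := ⟨hppos.le, le_trans (by linarith) (le_max_right _ _)⟩
  have hFR : F R < F p := hR0 R (le_max_left _ _)
  obtain ⟨ts, htsmem, htsmax⟩ := isCompact_Icc.exists_isMaxOn ⟨p, hpR⟩ hcont.continuousOn
  have htsp : F p ≤ F ts := htsmax hpR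
  have hts_pos : 0 < ts := by
    rcases eq_or_lt_of_le htsmem.1 with h|h
    · exfalso; rw [← h] at htsp; rw [← hF0] at htsp; linarith [hF0 ▸ htsp, hFp]
    · exact h
  have hts_ltR : ts < R := by
    rcases eq_or_lt_of_le htsmem.2 with h|h
    · exfalso; rw [h] at htsp; linarith
    · exact h
  have hglobal : ∀ t ∈ Set.Ici (0:ℝ), F t ≤ F ts := by
    intro t ht
    by_cases htR : t ≤ R
    · exact htsmax ⟨ht, htR⟩
    · push_neg at htR
      have : F t < F p := hR0 t (le_trans (le_max_left _ _) htR.le)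
      linarith
  have hfdts : fd ts = 0 := by
    have hloc : IsLocalMax F ts :=
      htsmax.isLocalMax (Icc_mem_nhds hts_pos hts_ltR)
    exact hloc.hasDerivAt_eq_zero (hderiv ts)
  -- any zero of fd is 0 or ts
  have hzeros : ∀ z, fd z = 0 → z = 0 ∨ z = ts := by
    intro z hz
    by_contra hcon
    push_neg at hcon
    obtain ⟨hz0, hzts⟩ := hcon
    rcases lt_trichotomy z 0 with h|h|h
    · exact hatmost z 0 ts h hts_pos hz hfd0 hfdts
    · exact hz0 h
    · rcases lt_trichotomy z ts with h2|h2|h2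
      · exact hatmost 0 z ts h h2 hfd0 hz hfdts
      · exact hzts h2
      · exact hatmost 0 ts z hts_pos h2 hfd0 hfdts hz
  have hδts : δ ≤ ts := by
    by_contra hlt
    push_neg at hlt
    have : fd ts > 0 := hδ ⟨hts_pos, hlt⟩
    rw [hfdts] at this; exact lt_irrefl 0 this
  -- fd positive on (0, ts)
  have hfdpos : ∀ q ∈ Set.Ioo (0:ℝ) ts, 0 < fd q := by
    intro q hq
    have hqne : fd q ≠ 0 := by
      intro h
      rcases hzeros q h with h'|h'
      · exact absurd h' (ne_of_gt hq.1)
      · exact absurd h' (ne_of_lt hq.2)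
    rcases hqne.lt_or_gt with hneg|hpos
    · exfalso
      set p₀ : ℝ := (min δ q)/2 with hp₀
      have hp₀pos : 0 < p₀ := by
        have : 0 < min δ q := lt_min hδpos hq.1
        positivity
      have hp₀δ : p₀ < δ := by
        have : min δ q ≤ δ := min_le_left _ _
        rw [hp₀]; linarith
      have hp₀q : p₀ < q := by
        have : min δ q ≤ q := min_le_right _ _
        rw [hp₀]; linarith
      have hfdp₀ : 0 < fd p₀ := hδ ⟨hp₀pos, hp₀δ⟩
      have hsub := intermediate_value_Ioo' hp₀q.le hfdcont.continuousOn
      have h0mem : (0:ℝ) ∈ Set.Ioo (fd q) (fd p₀) := ⟨hneg, hfdp₀⟩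
      obtain ⟨r, hr, hr0⟩ := hsub h0mem
      rcases hzeros r hr0 with h'|h'
      · rw [h'] at hr; exact absurd hr.1 (not_lt.mpr hp₀pos.le)
      · rw [h'] at hr; linarith [hr.2, hq.2]
    · exact hpos
  -- fd negative on (ts, ∞)
  have hfdneg : ∀ q, ts < q → fd q < 0 := by
    have hnotpos : ¬ ∃ q, ts < q ∧ 0 < fd q := by
      rintro ⟨q, hq, hqpos⟩
      have hall : ∀ r, ts < r → 0 < fd r := by
        intro r hr
        have hrne : fd r ≠ 0 := by
          intro h
          rcases hzeros r h with h'|h'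
          · rw [h'] at hr; linarith
          · rw [h'] at hr; exact lt_irrefl ts hr
        rcases hrne.lt_or_gt with hneg|hpos
        · exfalso
          rcases lt_trichotomy r q with hlt|heq|hgt
          · obtain ⟨z, hz, hz0⟩ := intermediate_value_Ioo hlt.le hfdcont.continuousOn
              (⟨hneg, hqpos⟩ : (0:ℝ) ∈ Set.Ioo (fd r) (fd q))
            rcases hzeros z hz0 with h'|h'
            · rw [h'] at hz; linarith [hz.1]
            · rw [h'] at hz; linarith [hz.1]
          · rw [heq] at hneg; linarith
          · obtain ⟨z, hz, hz0⟩ := intermediate_value_Ioo' hgt.le hfdcont.continuousOn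
              (⟨hneg, hqpos⟩ : (0:ℝ) ∈ Set.Ioo (fd r) (fd q))
            rcases hzeros z hz0 with h'|h'
            · rw [h'] at hz; linarith [hz.1]
            · rw [h'] at hz; linarith [hz.1]
        · exact hpos
      -- F strictly increasing on [ts, ∞) : contradiction with tendsto 0
      have hmono : StrictMonoOn F (Set.Ici ts) := by
        apply strictMonoOn_of_hasDerivWithinAt_pos (convex_Ici ts) hcont.continuousOn
          (fun x hx => (hderiv x).hasDerivWithinAt)
        intro x hx
        rw [interior_Ici] at hx
        exact hall x hx
      set T : ℝ := max R (ts+1) with hT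
      have hT1 : ts + 1 ≤ T := le_max_right _ _
      have hFts1 : F ts < F (ts+1) :=
        hmono (self_mem_Ici) (by simp) (by linarith)
      have hFT : F (ts+1) ≤ F T := by
        rcases eq_or_lt_of_le hT1 with h|h
        · rw [h]
        · exact (hmono (by simp) (by simp; linarith) h).le
      have hFTlt : F T < F p := hR0 T (le_trans (le_max_left _ _) (le_max_left _ _))
      linarith
    intro q hq
    have hqne : fd q ≠ 0 := by
      intro h
      rcases hzeros q h with h'|h'
      · rw [h'] at hq; linarith
      · rw [h'] at hq; exact lt_irrefl ts hq
    rcases hqne.lt_or_gt with hneg|hpos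
    · exact hneg
    · exact absurd ⟨q, hq, hpos⟩ hnotpos
  -- conclusions
  have hmonoF : StrictMonoOn F (Set.Icc 0 ts) := by
    apply strictMonoOn_of_hasDerivWithinAt_pos (convex_Icc 0 ts) hcont.continuousOn
      (fun x hx => (hderiv x).hasDerivWithinAt)
    intro x hx
    rw [interior_Icc] at hx
    exact hfdpos x hx
  have hantiF : StrictAntiOn F (Set.Ici ts) := by
    apply strictAntiOn_of_hasDerivWithinAt_neg (convex_Ici ts) hcont.continuousOn
      (fun x hx => (hderiv x).hasDerivWithinAt)
    intro x hx
    rw [interior_Ici] at hx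
    exact hfdneg x hx
  refine ⟨ts, hts_pos, hglobal, hmonoF, hantiF, ?_⟩
  intro t ht htmax
  by_contra htne
  rcases lt_or_gt_of_ne htne with hlt|hgt
  · have : F t < F ts := hmonoF ⟨ht, hlt.le⟩ ⟨hts_pos.le, le_refl ts⟩ hlt
    have := htmax ts (le_of_lt hts_pos)
    linarith
  · have : F ts > F t := hantiF (self_mem_Ici) (le_of_lt hgt) hgt
    have := htmax ts (le_of_lt hts_pos)
    linarith

theorem impulse_response_unimodal (a₁ a₂ a₃ g₁ g₂ : ℝ)
    (ha₁ : 0 < a₁) (ha₂ : 0 < a₂) (ha₃ : 0 < a₃)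
    (h₁₂ : a₁ ≠ a₂) (h₁₃ : a₁ ≠ a₃) (h₂₃ : a₂ ≠ a₃)
    (hg₁ : 0 < g₁) (hg₂ : 0 < g₂) :
    ∃ tstar : ℝ, 0 < tstar ∧
      (∀ t ∈ Set.Ici (0:ℝ), impResp a₁ a₂ a₃ g₁ g₂ t ≤ impResp a₁ a₂ a₃ g₁ g₂ tstar) ∧
      StrictMonoOn (impResp a₁ a₂ a₃ g₁ g₂) (Set.Icc 0 tstar) ∧
      StrictAntiOn (impResp a₁ a₂ a₃ g₁ g₂) (Set.Ici tstar) ∧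
      (∀ t ∈ Set.Ici (0:ℝ),
        (∀ s ∈ Set.Ici (0:ℝ), impResp a₁ a₂ a₃ g₁ g₂ s ≤ impResp a₁ a₂ a₃ g₁ g₂ t) →
        t = tstar) := by
  have hα : a₂ - a₁ ≠ 0 := sub_ne_zero.mpr h₁₂.symm
  have hβ : a₃ - a₁ ≠ 0 := sub_ne_zero.mpr h₁₃.symm
  have hγ : a₃ - a₂ ≠ 0 := sub_ne_zero.mpr h₂₃.symm
  have hg : (0:ℝ) < g₁ * g₂ := mul_pos hg₁ hg₂
  refine unimodal_aux ha₁ ha₂ ha₃ h₁₂ h₁₃ h₂₃ ?_ ?_ ?_ ?_ ?_ ?_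
    (impResp_eq a₁ a₂ a₃ g₁ g₂ h₁₂ h₁₃ h₂₃)
  · exact div_ne_zero hg.ne' (mul_ne_zero hα hβ)
  · exact div_ne_zero (neg_ne_zero.mpr hg.ne') (mul_ne_zero hα hγ)
  · exact div_ne_zero hg.ne' (mul_ne_zero hβ hγ)
  · field_simp
    ring
  · field_simp
    ring
  · have hid : g₁*g₂/((a₂-a₁)*(a₃-a₁)) * a₁^2 + (-(g₁*g₂)/((a₂-a₁)*(a₃-a₂))) * a₂^2
        + g₁*g₂/((a₃-a₁)*(a₃-a₂)) * a₃^2 = g₁ * g₂ := by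
      field_simp
      ring
    rw [hid]
    exact hg
end

section
/- For the cascade system above, the impulse response g(t) = C e^{tA} B is strictly positive for all t > 0. -/
open Matrix Set Filter

/-- second divided difference of `s ↦ exp (-(s*t))` at `x,y,z` -/
noncomputable def ddcas (x y z t : ℝ) : ℝ :=
  Real.exp (-(x*t)) / ((y-x)*(z-x)) - Real.exp (-(y*t)) / ((y-x)*(z-y))
    + Real.exp (-(z*t)) / ((z-x)*(z-y))

lemma ddcas_key (x y z t : ℝ) (hxy : x < y) (hyz : y < z) (ht : 0 < t) :
    (z-x) * Real.exp (-(y*t)) < (z-y) * Real.exp (-(x*t)) + (y-x) * Real.exp (-(z*t)) := by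
  have hxz : x < z := hxy.trans hyz
  have hzx : (0:ℝ) < z - x := by linarith
  have hne : (-(x*t)) ≠ (-(z*t)) := by
    have : x * t < z * t := by nlinarith
    intro h; nlinarith [h]
  have hzy : (0:ℝ) < z - y := by linarith
  have hyx : (0:ℝ) < y - x := by linarith
  have hb := strictConvexOn_exp.2 (Set.mem_univ (-(x*t))) (Set.mem_univ (-(z*t))) hne
    (div_pos hzy hzx) (div_pos hyx hzx)
    (by field_simp; ring : (z-y)/(z-x) + (y-x)/(z-x) = 1)
  have harg : ((z-y)/(z-x)) • (-(x*t)) + ((y-x)/(z-x)) • (-(z*t)) = -(y*t) := by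
    simp only [smul_eq_mul]; rw [div_mul_eq_mul_div, div_mul_eq_mul_div, ← add_div, div_eq_iff hzx.ne']
    ring
  rw [harg] at hb
  simp only [smul_eq_mul] at hb
  have h2 := mul_lt_mul_of_pos_left hb hzx
  have e1 : (z-x) * ((z-y)/(z-x) * Real.exp (-(x*t)) + (y-x)/(z-x) * Real.exp (-(z*t)))
      = (z-y) * Real.exp (-(x*t)) + (y-x) * Real.exp (-(z*t)) := by
    field_simp
  rw [e1] at h2
  exact h2

lemma ddcas_pos_sorted (x y z t : ℝ) (hxy : x < y) (hyz : y < z) (ht : 0 < t) :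
    0 < ddcas x y z t := by
  have hxz : x < z := hxy.trans hyz
  have h1 : (0:ℝ) < y - x := by linarith
  have h2 : (0:ℝ) < z - x := by linarith
  have h3 : (0:ℝ) < z - y := by linarith
  have key := ddcas_key x y z t hxy hyz ht
  have hnum : 0 < (z-y) * Real.exp (-(x*t)) + (y-x) * Real.exp (-(z*t))
      - (z-x) * Real.exp (-(y*t)) := by linarith
  have hden : (0:ℝ) < (y-x)*(z-x)*(z-y) := by positivity
  have : ddcas x y z t = ((z-y) * Real.exp (-(x*t)) + (y-x) * Real.exp (-(z*t))
      - (z-x) * Real.exp (-(y*t))) / ((y-x)*(z-x)*(z-y)) := by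
    unfold ddcas
    field_simp
    ring
  rw [this]
  exact div_pos hnum hden

lemma ddcas_comm12 (x y z t : ℝ) (hxy : x ≠ y) (hxz : x ≠ z) (hyz : y ≠ z) :
    ddcas x y z t = ddcas y x z t := by
  have h1 : y - x ≠ 0 := sub_ne_zero.mpr (Ne.symm hxy)
  have h2 : z - x ≠ 0 := sub_ne_zero.mpr (Ne.symm hxz)
  have h3 : z - y ≠ 0 := sub_ne_zero.mpr (Ne.symm hyz)
  have h1' : x - y ≠ 0 := sub_ne_zero.mpr hxy
  unfold ddcas
  field_simp
  ring

lemma ddcas_comm23 (x y z t : ℝ) (hxy : x ≠ y) (hxz : x ≠ z) (hyz : y ≠ z) :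
    ddcas x y z t = ddcas x z y t := by
  have h1 : y - x ≠ 0 := sub_ne_zero.mpr (Ne.symm hxy)
  have h2 : z - x ≠ 0 := sub_ne_zero.mpr (Ne.symm hxz)
  have h3 : z - y ≠ 0 := sub_ne_zero.mpr (Ne.symm hyz)
  have h3' : y - z ≠ 0 := sub_ne_zero.mpr hyz
  unfold ddcas
  field_simp
  ring

lemma ddcas_pos (x y z t : ℝ) (hxy : x ≠ y) (hxz : x ≠ z) (hyz : y ≠ z) (ht : 0 < t) :
    0 < ddcas x y z t := by
  rcases lt_or_gt_of_ne hxy with h1 | h1 <;> rcases lt_or_gt_of_ne hxz with h2 | h2 <;>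
    rcases lt_or_gt_of_ne hyz with h3 | h3
  · exact ddcas_pos_sorted x y z t h1 h3 ht
  · rw [ddcas_comm23 x y z t hxy hxz hyz]
    exact ddcas_pos_sorted x z y t h2 h3 ht
  · exfalso; linarith
  · rw [ddcas_comm23 x y z t hxy hxz hyz, ddcas_comm12 x z y t hxz hxy (Ne.symm hyz)]
    exact ddcas_pos_sorted z x y t h2 h1 ht
  · rw [ddcas_comm12 x y z t hxy hxz hyz]
    exact ddcas_pos_sorted y x z t h1 h2 ht
  · exfalso; linarith
  · rw [ddcas_comm12 x y z t hxy hxz hyz, ddcas_comm23 y x z t (Ne.symm hxy) hyz hxz]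
    exact ddcas_pos_sorted y z x t h3 h2 ht
  · rw [ddcas_comm12 x y z t hxy hxz hyz, ddcas_comm23 y x z t (Ne.symm hxy) hyz hxz,
      ddcas_comm12 y z x t hyz (Ne.symm hxy) (Ne.symm hxz)]
    exact ddcas_pos_sorted z y x t h3 h1 ht

set_option maxHeartbeats 1000000 in
lemma impResp_formula (a₁ a₂ a₃ g₁ g₂ t : ℝ)
    (h₁₂ : a₁ ≠ a₂) (h₁₃ : a₁ ≠ a₃) (h₂₃ : a₂ ≠ a₃) :
    impResp a₁ a₂ a₃ g₁ g₂ t = g₁ * g₂ * ddcas a₁ a₂ a₃ t := by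
  have h12 : a₂ - a₁ ≠ 0 := sub_ne_zero.mpr (Ne.symm h₁₂)
  have h13 : a₃ - a₁ ≠ 0 := sub_ne_zero.mpr (Ne.symm h₁₃)
  have h23 : a₃ - a₂ ≠ 0 := sub_ne_zero.mpr (Ne.symm h₂₃)
  set P : Matrix (Fin 3) (Fin 3) ℝ :=
    !![1, 0, 0; g₁/(a₂-a₁), 1, 0; g₁*g₂/((a₂-a₁)*(a₃-a₁)), g₂/(a₃-a₂), 1] with hP
  set Q : Matrix (Fin 3) (Fin 3) ℝ :=
    !![1, 0, 0; -(g₁/(a₂-a₁)), 1, 0; g₁*g₂/((a₃-a₁)*(a₃-a₂)), -(g₂/(a₃-a₂)), 1] with hQ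
  set D : Matrix (Fin 3) (Fin 3) ℝ :=
    !![-(a₁*t), 0, 0; 0, -(a₂*t), 0; 0, 0, -(a₃*t)] with hD
  have hPQ : P * Q = 1 := by
    ext i j
    fin_cases i <;> fin_cases j <;>
      (try simp [hP, hQ, Matrix.mul_apply, Fin.sum_univ_three]) <;>
      (try field_simp) <;> ring
  have hQP : Q * P = 1 := by
    ext i j
    fin_cases i <;> fin_cases j <;>
      (try simp [hP, hQ, Matrix.mul_apply, Fin.sum_univ_three]) <;>
      (try field_simp) <;> ring
  set U : (Matrix (Fin 3) (Fin 3) ℝ)ˣ := ⟨P, Q, hPQ, hQP⟩ with hU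
  have hA : t • Acas a₁ a₂ a₃ g₁ g₂ = P * D * Q := by
    ext i j
    fin_cases i <;> fin_cases j <;>
      (try simp [Acas, hP, hQ, hD, Matrix.mul_apply, Fin.sum_univ_three]) <;>
      (try field_simp) <;> ring
  have he : NormedSpace.exp (P * D * Q) = P * NormedSpace.exp D * Q :=
    Matrix.exp_units_conj U D
  have hDdiag : D = Matrix.diagonal ![-(a₁*t), -(a₂*t), -(a₃*t)] := by
    ext i j
    fin_cases i <;> fin_cases j <;>
      simp [hD, Matrix.diagonal, Matrix.vecHead, Matrix.vecTail]
  have hexpD : NormedSpace.exp D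
      = !![Real.exp (-(a₁*t)), 0, 0; 0, Real.exp (-(a₂*t)), 0; 0, 0, Real.exp (-(a₃*t))] := by
    rw [hDdiag, Matrix.exp_diagonal]
    ext i j
    fin_cases i <;> fin_cases j <;>
      simp [Matrix.diagonal, Matrix.vecHead, Matrix.vecTail, Real.exp_eq_exp_ℝ]
  rw [impResp, hA, he, hexpD]
  unfold ddcas
  simp [hP, hQ, Bcas, Matrix.mul_apply, Matrix.mulVec, dotProduct, Fin.sum_univ_three]
  field_simp
  ring

theorem impulse_response_pos (a₁ a₂ a₃ g₁ g₂ : ℝ)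
    (ha₁ : 0 < a₁) (ha₂ : 0 < a₂) (ha₃ : 0 < a₃)
    (h₁₂ : a₁ ≠ a₂) (h₁₃ : a₁ ≠ a₃) (h₂₃ : a₂ ≠ a₃)
    (hg₁ : 0 < g₁) (hg₂ : 0 < g₂) :
    ∀ t : ℝ, 0 < t → 0 < impResp a₁ a₂ a₃ g₁ g₂ t := by
  intro t ht
  rw [impResp_formula a₁ a₂ a₃ g₁ g₂ t h₁₂ h₁₃ h₂₃]
  exact mul_pos (mul_pos hg₁ hg₂) (ddcas_pos a₁ a₂ a₃ t h₁₂ h₁₃ h₂₃ ht)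
end

section
/- Fix T > 0 and let z(τ,T) = C e^{Aτ}(I - e^{AT})^{-1}B for the cascade system. The equation ∂z/∂τ(τ,T) = C e^{Aτ}(I-e^{AT})^{-1}AB = 0 has exactly two roots τ₁, τ₂ in (0,T) with τ₁ < τ₂; z(·,T) is decreasing on (0,τ₁) and (τ₂,T) and increasing on (τ₁,τ₂), so τ₁ is the point of minimum and τ₂ the point of maximum of z(·,T) on [0,T]. -/
open Matrix Set Filter

noncomputable def Pm (a₁ a₂ a₃ g₁ g₂ : ℝ) : Matrix (Fin 3) (Fin 3) ℝ :=
  !![1,0,0; g₁/(a₂-a₁),1,0; g₁*g₂/((a₂-a₁)*(a₃-a₁)), g₂/(a₃-a₂),1]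

noncomputable def Pim (a₁ a₂ a₃ g₁ g₂ : ℝ) : Matrix (Fin 3) (Fin 3) ℝ :=
  !![1,0,0; -(g₁/(a₂-a₁)),1,0;
     g₁/(a₂-a₁)*(g₂/(a₃-a₂)) - g₁*g₂/((a₂-a₁)*(a₃-a₁)), -(g₂/(a₃-a₂)),1]

noncomputable def ccoef (x y z gg T : ℝ) : ℝ := gg/((y-x)*(z-x)*(1-Real.exp (-(x*T))))

noncomputable def psiF (a₁ a₂ a₃ g₁ g₂ T τ : ℝ) : ℝ :=
  -(a₁ * ccoef a₁ a₂ a₃ (g₁*g₂) T * Real.exp (-(a₁*τ)) +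
    a₂ * ccoef a₂ a₁ a₃ (g₁*g₂) T * Real.exp (-(a₂*τ)) +
    a₃ * ccoef a₃ a₁ a₂ (g₁*g₂) T * Real.exp (-(a₃*τ)))

lemma diag3 (x y z : ℝ) : Matrix.diagonal ![x,y,z] = !![x,0,0;0,y,0;0,0,z] := by
  ext i j
  fin_cases i <;> fin_cases j <;>
    simp [Matrix.diagonal_apply, Matrix.vecHead, Matrix.vecTail]

lemma Pm_mul_Pim (a₁ a₂ a₃ g₁ g₂ : ℝ) :
    Pm a₁ a₂ a₃ g₁ g₂ * Pim a₁ a₂ a₃ g₁ g₂ = 1 := by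
  rw [Pm, Pim, Matrix.mul_fin_three, Matrix.one_fin_three]
  ext i j
  fin_cases i <;> fin_cases j <;> (simp [Matrix.vecHead, Matrix.vecTail]; try ring)

lemma Pim_mul_Pm (a₁ a₂ a₃ g₁ g₂ : ℝ) :
    Pim a₁ a₂ a₃ g₁ g₂ * Pm a₁ a₂ a₃ g₁ g₂ = 1 := by
  rw [Pm, Pim, Matrix.mul_fin_three, Matrix.one_fin_three]
  ext i j
  fin_cases i <;> fin_cases j <;> (simp [Matrix.vecHead, Matrix.vecTail]; try ring)

lemma Acas_conj (a₁ a₂ a₃ g₁ g₂ : ℝ) (h₁₂ : a₁ ≠ a₂) (h₁₃ : a₁ ≠ a₃) (h₂₃ : a₂ ≠ a₃) :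
    Acas a₁ a₂ a₃ g₁ g₂ =
      Pm a₁ a₂ a₃ g₁ g₂ * Matrix.diagonal ![-a₁,-a₂,-a₃] * Pim a₁ a₂ a₃ g₁ g₂ := by
  have d21 : a₂ - a₁ ≠ 0 := sub_ne_zero.2 (Ne.symm h₁₂)
  have d31 : a₃ - a₁ ≠ 0 := sub_ne_zero.2 (Ne.symm h₁₃)
  have d32 : a₃ - a₂ ≠ 0 := sub_ne_zero.2 (Ne.symm h₂₃)
  rw [Acas, Pm, Pim, diag3, Matrix.mul_fin_three, Matrix.mul_fin_three]
  ext i j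
  fin_cases i <;> fin_cases j <;> (simp; try (field_simp; try ring))

lemma expA (a₁ a₂ a₃ g₁ g₂ : ℝ) (h₁₂ : a₁ ≠ a₂) (h₁₃ : a₁ ≠ a₃) (h₂₃ : a₂ ≠ a₃) (t : ℝ) :
    NormedSpace.exp (t • Acas a₁ a₂ a₃ g₁ g₂) =
      Pm a₁ a₂ a₃ g₁ g₂ *
        Matrix.diagonal ![Real.exp (-(a₁*t)), Real.exp (-(a₂*t)), Real.exp (-(a₃*t))] *
        Pim a₁ a₂ a₃ g₁ g₂ := by
  have hP : IsUnit (Pm a₁ a₂ a₃ g₁ g₂) :=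
    ⟨⟨_, _, Pm_mul_Pim a₁ a₂ a₃ g₁ g₂, Pim_mul_Pm a₁ a₂ a₃ g₁ g₂⟩, rfl⟩
  have hPinv : (Pm a₁ a₂ a₃ g₁ g₂)⁻¹ = Pim a₁ a₂ a₃ g₁ g₂ :=
    Matrix.inv_eq_right_inv (Pm_mul_Pim _ _ _ _ _)
  have h1 : t • Acas a₁ a₂ a₃ g₁ g₂ =
      Pm a₁ a₂ a₃ g₁ g₂ * Matrix.diagonal (t • ![-a₁,-a₂,-a₃]) * (Pm a₁ a₂ a₃ g₁ g₂)⁻¹ := by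
    rw [hPinv, Acas_conj a₁ a₂ a₃ g₁ g₂ h₁₂ h₁₃ h₂₃, Matrix.diagonal_smul,
      mul_smul_comm, smul_mul_assoc]
  rw [h1, Matrix.exp_conj _ _ hP, Matrix.exp_diagonal, hPinv]
  have hv : NormedSpace.exp (t • ![-a₁,-a₂,-a₃]) =
      ![Real.exp (-(a₁*t)), Real.exp (-(a₂*t)), Real.exp (-(a₃*t))] := by
    funext i
    rw [Pi.exp_def]
    fin_cases i <;> simp [← Real.exp_eq_exp_ℝ, Matrix.vecHead, Matrix.vecTail, mul_comm]
  rw [hv]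

lemma collapse (a₁ a₂ a₃ g₁ g₂ : ℝ) (v w : Fin 3 → ℝ) :
    (Pm a₁ a₂ a₃ g₁ g₂ * Matrix.diagonal v * Pim a₁ a₂ a₃ g₁ g₂) *
      (Pm a₁ a₂ a₃ g₁ g₂ * Matrix.diagonal w * Pim a₁ a₂ a₃ g₁ g₂) =
    Pm a₁ a₂ a₃ g₁ g₂ * Matrix.diagonal (fun i => v i * w i) * Pim a₁ a₂ a₃ g₁ g₂ := by
  rw [← Matrix.diagonal_mul_diagonal]
  calc (Pm a₁ a₂ a₃ g₁ g₂ * Matrix.diagonal v * Pim a₁ a₂ a₃ g₁ g₂) *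
      (Pm a₁ a₂ a₃ g₁ g₂ * Matrix.diagonal w * Pim a₁ a₂ a₃ g₁ g₂)
      = Pm a₁ a₂ a₃ g₁ g₂ * Matrix.diagonal v *
        ((Pim a₁ a₂ a₃ g₁ g₂ * Pm a₁ a₂ a₃ g₁ g₂) *
          (Matrix.diagonal w * Pim a₁ a₂ a₃ g₁ g₂)) := by
        simp only [Matrix.mul_assoc]
    _ = _ := by rw [Pim_mul_Pm, one_mul, ← Matrix.mul_assoc, ← Matrix.mul_assoc]

lemma one_sub_conj (a₁ a₂ a₃ g₁ g₂ : ℝ) (v : Fin 3 → ℝ) :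
    1 - Pm a₁ a₂ a₃ g₁ g₂ * Matrix.diagonal v * Pim a₁ a₂ a₃ g₁ g₂ =
      Pm a₁ a₂ a₃ g₁ g₂ * Matrix.diagonal (fun i => 1 - v i) * Pim a₁ a₂ a₃ g₁ g₂ := by
  have h2 : Matrix.diagonal (fun i => (1:ℝ) - v i) = 1 - Matrix.diagonal v := by
    rw [← Matrix.diagonal_one, ← Matrix.diagonal_sub]
  rw [h2, Matrix.mul_sub, Matrix.sub_mul, mul_one, Pm_mul_Pim]

lemma inv_one_sub_expA (a₁ a₂ a₃ g₁ g₂ T : ℝ)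
    (h₁₂ : a₁ ≠ a₂) (h₁₃ : a₁ ≠ a₃) (h₂₃ : a₂ ≠ a₃)
    (h1 : 1 - Real.exp (-(a₁*T)) ≠ 0) (h2 : 1 - Real.exp (-(a₂*T)) ≠ 0)
    (h3 : 1 - Real.exp (-(a₃*T)) ≠ 0) :
    (1 - NormedSpace.exp (T • Acas a₁ a₂ a₃ g₁ g₂))⁻¹ =
      Pm a₁ a₂ a₃ g₁ g₂ *
        Matrix.diagonal ![(1-Real.exp (-(a₁*T)))⁻¹, (1-Real.exp (-(a₂*T)))⁻¹,
          (1-Real.exp (-(a₃*T)))⁻¹] * Pim a₁ a₂ a₃ g₁ g₂ := by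
  apply Matrix.inv_eq_right_inv
  rw [expA a₁ a₂ a₃ g₁ g₂ h₁₂ h₁₃ h₂₃ T, one_sub_conj, collapse]
  have hv : (fun i => (fun i => 1 - ![Real.exp (-(a₁*T)), Real.exp (-(a₂*T)),
        Real.exp (-(a₃*T))] i) i *
      ![(1-Real.exp (-(a₁*T)))⁻¹, (1-Real.exp (-(a₂*T)))⁻¹, (1-Real.exp (-(a₃*T)))⁻¹] i)
      = fun _ => (1:ℝ) := by
    funext i
    fin_cases i <;>
      simp [Matrix.vecHead, Matrix.vecTail, mul_inv_cancel₀, h1, h2, h3]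
  rw [hv]
  have : Matrix.diagonal (fun _ => (1:ℝ)) = (1 : Matrix (Fin 3) (Fin 3) ℝ) := Matrix.diagonal_one
  rw [this, mul_one, Pm_mul_Pim]

lemma entry2 (a₁ a₂ a₃ g₁ g₂ : ℝ) (w : Fin 3 → ℝ) :
    ((Pm a₁ a₂ a₃ g₁ g₂ * Matrix.diagonal w * Pim a₁ a₂ a₃ g₁ g₂) *ᵥ Bcas) 2 =
      w 0 * (g₁*g₂/((a₂-a₁)*(a₃-a₁))) +
      w 1 * (g₂/(a₃-a₂)) * (-(g₁/(a₂-a₁))) +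
      w 2 * (g₁/(a₂-a₁)*(g₂/(a₃-a₂)) - g₁*g₂/((a₂-a₁)*(a₃-a₁))) := by
  simp only [Matrix.mulVec, dotProduct, Fin.sum_univ_three, Matrix.mul_apply,
    Matrix.mul_diagonal]
  simp [Pm, Pim, Bcas, Matrix.vecHead, Matrix.vecTail]
  ring

lemma zfun_formula (a₁ a₂ a₃ g₁ g₂ T : ℝ)
    (h₁₂ : a₁ ≠ a₂) (h₁₃ : a₁ ≠ a₃) (h₂₃ : a₂ ≠ a₃)
    (h1 : 1 - Real.exp (-(a₁*T)) ≠ 0) (h2 : 1 - Real.exp (-(a₂*T)) ≠ 0)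
    (h3 : 1 - Real.exp (-(a₃*T)) ≠ 0) (τ : ℝ) :
    zfun a₁ a₂ a₃ g₁ g₂ τ T =
      ccoef a₁ a₂ a₃ (g₁*g₂) T * Real.exp (-(a₁*τ)) +
      ccoef a₂ a₁ a₃ (g₁*g₂) T * Real.exp (-(a₂*τ)) +
      ccoef a₃ a₁ a₂ (g₁*g₂) T * Real.exp (-(a₃*τ)) := by
  have n21 : a₂ - a₁ ≠ 0 := sub_ne_zero.2 (Ne.symm h₁₂)
  have n31 : a₃ - a₁ ≠ 0 := sub_ne_zero.2 (Ne.symm h₁₃)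
  have n32 : a₃ - a₂ ≠ 0 := sub_ne_zero.2 (Ne.symm h₂₃)
  rw [zfun, expA a₁ a₂ a₃ g₁ g₂ h₁₂ h₁₃ h₂₃ τ,
    inv_one_sub_expA a₁ a₂ a₃ g₁ g₂ T h₁₂ h₁₃ h₂₃ h1 h2 h3, collapse, entry2]
  simp only [Matrix.cons_val_zero, Matrix.cons_val_one, Matrix.head_cons,
    Matrix.cons_val_two, Matrix.tail_cons, Matrix.head_fin_const]
  rw [ccoef, ccoef, ccoef,
    show (a₁-a₂)*(a₃-a₂)*(1-Real.exp (-(a₂*T)))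
      = -((a₂-a₁)*((a₃-a₂)*(1-Real.exp (-(a₂*T))))) by ring,
    div_neg,
    show (a₁-a₃)*(a₂-a₃)*(1-Real.exp (-(a₃*T)))
      = (a₃-a₁)*((a₃-a₂)*(1-Real.exp (-(a₃*T)))) by ring]
  have hrel : a₃ - a₁ = (a₂ - a₁) + (a₃ - a₂) := by ring
  generalize (1 - Real.exp (-(a₁*T))) = s1 at h1 ⊢
  generalize (1 - Real.exp (-(a₂*T))) = s2 at h2 ⊢
  generalize (1 - Real.exp (-(a₃*T))) = s3 at h3 ⊢
  generalize (Real.exp (-(a₁*τ))) = e1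
  generalize (Real.exp (-(a₂*τ))) = e2
  generalize (Real.exp (-(a₃*τ))) = e3
  generalize (a₂ - a₁) = u at n21 hrel ⊢
  generalize (a₃ - a₂) = w at n32 hrel ⊢
  generalize (a₃ - a₁) = v at n31 hrel ⊢
  subst hrel
  field_simp
  ring

lemma psi_formula (a₁ a₂ a₃ g₁ g₂ T : ℝ)
    (h₁₂ : a₁ ≠ a₂) (h₁₃ : a₁ ≠ a₃) (h₂₃ : a₂ ≠ a₃)
    (h1 : 1 - Real.exp (-(a₁*T)) ≠ 0) (h2 : 1 - Real.exp (-(a₂*T)) ≠ 0)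
    (h3 : 1 - Real.exp (-(a₃*T)) ≠ 0) (τ : ℝ) :
    ((NormedSpace.exp (τ • Acas a₁ a₂ a₃ g₁ g₂) *
      (1 - NormedSpace.exp (T • Acas a₁ a₂ a₃ g₁ g₂))⁻¹ *
      Acas a₁ a₂ a₃ g₁ g₂) *ᵥ Bcas) 2 = psiF a₁ a₂ a₃ g₁ g₂ T τ := by
  have n21 : a₂ - a₁ ≠ 0 := sub_ne_zero.2 (Ne.symm h₁₂)
  have n31 : a₃ - a₁ ≠ 0 := sub_ne_zero.2 (Ne.symm h₁₃)
  have n32 : a₃ - a₂ ≠ 0 := sub_ne_zero.2 (Ne.symm h₂₃)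
  rw [expA a₁ a₂ a₃ g₁ g₂ h₁₂ h₁₃ h₂₃ τ,
    inv_one_sub_expA a₁ a₂ a₃ g₁ g₂ T h₁₂ h₁₃ h₂₃ h1 h2 h3,
    Acas_conj a₁ a₂ a₃ g₁ g₂ h₁₂ h₁₃ h₂₃, collapse, collapse, entry2]
  simp only [Matrix.cons_val_zero, Matrix.cons_val_one, Matrix.head_cons,
    Matrix.cons_val_two, Matrix.tail_cons, Matrix.head_fin_const]
  rw [psiF, ccoef, ccoef, ccoef,
    show (a₁-a₂)*(a₃-a₂)*(1-Real.exp (-(a₂*T)))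
      = -((a₂-a₁)*((a₃-a₂)*(1-Real.exp (-(a₂*T))))) by ring,
    div_neg,
    show (a₁-a₃)*(a₂-a₃)*(1-Real.exp (-(a₃*T)))
      = (a₃-a₁)*((a₃-a₂)*(1-Real.exp (-(a₃*T)))) by ring]
  have hrel : a₃ - a₁ = (a₂ - a₁) + (a₃ - a₂) := by ring
  generalize (1 - Real.exp (-(a₁*T))) = s1 at h1 ⊢
  generalize (1 - Real.exp (-(a₂*T))) = s2 at h2 ⊢
  generalize (1 - Real.exp (-(a₃*T))) = s3 at h3 ⊢
  generalize (Real.exp (-(a₁*τ))) = e1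
  generalize (Real.exp (-(a₂*τ))) = e2
  generalize (Real.exp (-(a₃*τ))) = e3
  generalize (a₂ - a₁) = u at n21 hrel ⊢
  generalize (a₃ - a₂) = w at n32 hrel ⊢
  generalize (a₃ - a₁) = v at n31 hrel ⊢
  subst hrel
  field_simp
  ring

lemma sub_exp_pos (T t : ℝ) (hT : 0 < T) (ht : 0 < t) : 0 < 1 - Real.exp (-(t*T)) := by
  have h : Real.exp (-(t*T)) < 1 := Real.exp_lt_one_iff.2 (by nlinarith)
  linarith

lemma auxG (u : ℝ) (hu : 0 < u) : 0 < u*Real.exp u - Real.exp u + 1 := by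
  have hD : ∀ v : ℝ, HasDerivAt (fun w => w*Real.exp w - Real.exp w + 1) (v*Real.exp v) v := by
    intro v
    have h1 : HasDerivAt (fun w => w*Real.exp w) (1*Real.exp v + v*Real.exp v) v :=
      (hasDerivAt_id v).mul (Real.hasDerivAt_exp v)
    have h2 := (h1.sub (Real.hasDerivAt_exp v)).add_const 1
    exact h2.congr_deriv (by ring)
  have hmono : StrictMonoOn (fun w => w*Real.exp w - Real.exp w + 1) (Ici 0) := by
    apply strictMonoOn_of_deriv_pos (convex_Ici 0)
    · exact (Continuous.continuousOn (by continuity))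
    · intro v hv
      rw [interior_Ici] at hv
      rw [(hD v).deriv]
      exact mul_pos hv (Real.exp_pos v)
  have := hmono (self_mem_Ici) (le_of_lt hu : (0:ℝ) ≤ u) hu
  simpa using this

lemma auxF (u : ℝ) (hu : 0 < u) : 2*(Real.exp u - 1) < u*(Real.exp u + 1) := by
  have hD : ∀ v : ℝ, HasDerivAt (fun w => w*(Real.exp w + 1) - 2*(Real.exp w - 1))
      (v*Real.exp v - Real.exp v + 1) v := by
    intro v
    have h1 : HasDerivAt (fun w => w*(Real.exp w + 1)) (1*(Real.exp v + 1) + v*Real.exp v) v :=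
      (hasDerivAt_id v).mul ((Real.hasDerivAt_exp v).add_const 1)
    have h2 : HasDerivAt (fun w => 2*(Real.exp w - 1)) (2*Real.exp v) v := by
      simpa using ((Real.hasDerivAt_exp v).sub_const 1).const_mul 2
    exact (h1.sub h2).congr_deriv (by ring)
  have hmono : StrictMonoOn (fun w => w*(Real.exp w + 1) - 2*(Real.exp w - 1)) (Ici 0) := by
    apply strictMonoOn_of_deriv_pos (convex_Ici 0)
    · exact (Continuous.continuousOn (by continuity))
    · intro v hv
      rw [interior_Ici] at hv
      rw [(hD v).deriv]
      exact auxG v hv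
  have := hmono (self_mem_Ici) (le_of_lt hu : (0:ℝ) ≤ u) hu
  simp at this
  linarith

lemma hconvF (T : ℝ) (hT : 0 < T) :
    StrictConvexOn ℝ (Ioi (0:ℝ)) (fun x => x + x/(Real.exp (x*T)-1)) := by
  have hE1 : ∀ x : ℝ, x ∈ Ioi (0:ℝ) → (0:ℝ) < Real.exp (x*T) - 1 := by
    intro x hx
    have : (1:ℝ) < Real.exp (x*T) := Real.one_lt_exp_iff.2 (mul_pos hx hT)
    linarith
  have hexp : ∀ x : ℝ, HasDerivAt (fun y => Real.exp (y*T)) (Real.exp (x*T)*T) x := by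
    intro x
    simpa [Function.comp_def] using (Real.hasDerivAt_exp (x*T)).comp x (hasDerivAt_mul_const T)
  have hden : ∀ x : ℝ, HasDerivAt (fun y => Real.exp (y*T) - 1) (Real.exp (x*T)*T) x :=
    fun x => (hexp x).sub_const 1
  have hF' : ∀ x : ℝ, x ∈ Ioi (0:ℝ) → HasDerivAt (fun y => y + y/(Real.exp (y*T)-1))
      (1 + (1*(Real.exp (x*T)-1) - x*(Real.exp (x*T)*T))/(Real.exp (x*T)-1)^2) x := by
    intro x hx
    exact (hasDerivAt_id x).add
      ((hasDerivAt_id x).div (hden x) (ne_of_gt (hE1 x hx)))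
  have hF'' : ∀ x : ℝ, x ∈ Ioi (0:ℝ) → HasDerivAt
      (fun y => 1 + (1*(Real.exp (y*T)-1) - y*(Real.exp (y*T)*T))/(Real.exp (y*T)-1)^2)
      (((-(x*T^2*Real.exp (x*T)))*((Real.exp (x*T)-1)^2) -
        (1*(Real.exp (x*T)-1) - x*(Real.exp (x*T)*T))*
          (((2:ℕ):ℝ)*(Real.exp (x*T)-1)^1*(Real.exp (x*T)*T)))
        /((Real.exp (x*T)-1)^2)^2) x := by
    intro x hx
    have hnum : HasDerivAt (fun y => 1*(Real.exp (y*T)-1) - y*(Real.exp (y*T)*T))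
        (-(x*T^2*Real.exp (x*T))) x := by
      have ha : HasDerivAt (fun y => (1:ℝ)*(Real.exp (y*T)-1)) (1*(Real.exp (x*T)*T)) x :=
        (hden x).const_mul 1
      have hc : HasDerivAt (fun y => Real.exp (y*T)*T) (Real.exp (x*T)*T*T) x :=
        (hexp x).mul_const T
      have hb : HasDerivAt (fun y => y*(Real.exp (y*T)*T))
          (1*(Real.exp (x*T)*T) + x*(Real.exp (x*T)*T*T)) x :=
        (hasDerivAt_id x).mul hc
      exact (ha.sub hb).congr_deriv (by ring)
    have hpow : HasDerivAt (fun y => (Real.exp (y*T)-1)^2)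
        (((2:ℕ):ℝ)*(Real.exp (x*T)-1)^1*(Real.exp (x*T)*T)) x := (hden x).pow 2
    have hdiv := hnum.div hpow (pow_ne_zero 2 (ne_of_gt (hE1 x hx)))
    exact hdiv.const_add 1
  apply strictConvexOn_of_deriv2_pos (convex_Ioi 0)
  · intro x hx
    exact ((hF' x hx).continuousAt).continuousWithinAt
  · intro x hx
    rw [interior_Ioi] at hx
    have h2 : deriv^[2] (fun y => y + y/(Real.exp (y*T)-1)) x
        = deriv (deriv (fun y => y + y/(Real.exp (y*T)-1))) x := by
      rw [show (2:ℕ) = 1 + 1 from rfl, Function.iterate_succ_apply', Function.iterate_one]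
    rw [h2]
    have hEq : deriv (fun y => y + y/(Real.exp (y*T)-1)) =ᶠ[nhds x]
        (fun y => 1 + (1*(Real.exp (y*T)-1) - y*(Real.exp (y*T)*T))/(Real.exp (y*T)-1)^2) :=
      Filter.eventuallyEq_of_mem (isOpen_Ioi.mem_nhds hx) (fun y hy => (hF' y hy).deriv)
    rw [hEq.deriv_eq, (hF'' x hx).deriv]
    have hE := hE1 x hx
    have hA := auxF (x*T) (mul_pos hx hT)
    apply div_pos
    · have key : (-(x*T^2*Real.exp (x*T)))*((Real.exp (x*T)-1)^2) -
          (1*(Real.exp (x*T)-1) - x*(Real.exp (x*T)*T))*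
            (((2:ℕ):ℝ)*(Real.exp (x*T)-1)^1*(Real.exp (x*T)*T))
          = (Real.exp (x*T)-1)*((T*Real.exp (x*T))*
              ((x*T)*(Real.exp (x*T)+1) - 2*(Real.exp (x*T)-1))) := by
        push_cast
        ring
      rw [key]
      exact mul_pos hE (mul_pos (mul_pos hT (Real.exp_pos _)) (by linarith))
    · positivity

lemma fval (T t : ℝ) (hT : 0 < T) (ht : 0 < t) :
    t/(1-Real.exp (-(t*T))) = t + t/(Real.exp (t*T)-1) := by
  have h1 : (0:ℝ) < 1 - Real.exp (-(t*T)) := sub_exp_pos T t hT ht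
  have h2 : (1:ℝ) < Real.exp (t*T) := Real.one_lt_exp_iff.2 (mul_pos ht hT)
  have h3 : Real.exp (-(t*T)) * Real.exp (t*T) = 1 := by
    rw [← Real.exp_add]; simp
  rw [Real.exp_neg] at h1 ⊢
  have h4 : Real.exp (t*T) ≠ 0 := Real.exp_ne_zero _
  have h5 : Real.exp (t*T) - 1 ≠ 0 := by linarith
  field_simp
  ring

noncomputable def Sexpr (T x y z : ℝ) : ℝ :=
  x/((y-x)*(z-x)*(1-Real.exp (-(x*T)))) + y/((x-y)*(z-y)*(1-Real.exp (-(y*T)))) +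
  z/((x-z)*(y-z)*(1-Real.exp (-(z*T))))

lemma Sexpr_swap12 (T x y z : ℝ) : Sexpr T x y z = Sexpr T y x z := by
  rw [Sexpr, Sexpr]; ring

lemma Sexpr_swap23 (T x y z : ℝ) : Sexpr T x y z = Sexpr T x z y := by
  rw [Sexpr, Sexpr]; ring

lemma Sexpr_pos_sorted (T x y z : ℝ) (hT : 0 < T) (hx : 0 < x) (hxy : x < y) (hyz : y < z) :
    0 < Sexpr T x y z := by
  have hy : 0 < y := hx.trans hxy
  have hz : 0 < z := hy.trans hyz
  have hsx := sub_exp_pos T x hT hx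
  have hsy := sub_exp_pos T y hT hy
  have hsz := sub_exp_pos T z hT hz
  have hcv := hconvF T hT
  have hslope := hcv.slope_strict_mono_adjacent (mem_Ioi.2 hx) (mem_Ioi.2 hz) hxy hyz
  rw [← fval T x hT hx, ← fval T y hT hy, ← fval T z hT hz] at hslope
  have key : Sexpr T x y z =
      ((z/(1-Real.exp (-(z*T))) - y/(1-Real.exp (-(y*T))))/(z-y) -
       (y/(1-Real.exp (-(y*T))) - x/(1-Real.exp (-(x*T))))/(y-x))/(z-x) := by
    rw [Sexpr,
      show (x-y)*(z-y)*(1-Real.exp (-(y*T))) = -((y-x)*((z-y)*(1-Real.exp (-(y*T))))) by ring,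
      div_neg,
      show (x-z)*(y-z)*(1-Real.exp (-(z*T))) = (z-x)*((z-y)*(1-Real.exp (-(z*T)))) by ring]
    have n1 : y - x ≠ 0 := ne_of_gt (by linarith)
    have n2 : z - y ≠ 0 := ne_of_gt (by linarith)
    have n3 : z - x ≠ 0 := ne_of_gt (by linarith)
    have n4 : 1 - Real.exp (-(x*T)) ≠ 0 := ne_of_gt hsx
    have n5 : 1 - Real.exp (-(y*T)) ≠ 0 := ne_of_gt hsy
    have n6 : 1 - Real.exp (-(z*T)) ≠ 0 := ne_of_gt hsz
    generalize (1 - Real.exp (-(x*T))) = sx at n4 ⊢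
    generalize (1 - Real.exp (-(y*T))) = sy at n5 ⊢
    generalize (1 - Real.exp (-(z*T))) = sz at n6 ⊢
    field_simp
    ring
  rw [key]
  apply div_pos (by linarith) (by linarith)

lemma Sexpr_pos (T x y z : ℝ) (hT : 0 < T) (hx : 0 < x) (hy : 0 < y) (hz : 0 < z)
    (hxy : x ≠ y) (hxz : x ≠ z) (hyz : y ≠ z) : 0 < Sexpr T x y z := by
  rcases lt_trichotomy x y with h1 | h1 | h1
  · rcases lt_trichotomy y z with h2 | h2 | h2
    · exact Sexpr_pos_sorted T x y z hT hx h1 h2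
    · exact absurd h2 hyz
    · rcases lt_trichotomy x z with h3 | h3 | h3
      · rw [Sexpr_swap23]; exact Sexpr_pos_sorted T x z y hT hx h3 h2
      · exact absurd h3 hxz
      · rw [Sexpr_swap23, Sexpr_swap12]; exact Sexpr_pos_sorted T z x y hT hz h3 h1
  · exact absurd h1 hxy
  · rcases lt_trichotomy x z with h2 | h2 | h2
    · rw [Sexpr_swap12]; exact Sexpr_pos_sorted T y x z hT hy h1 h2
    · exact absurd h2 hxz
    · rcases lt_trichotomy y z with h3 | h3 | h3
      · rw [Sexpr_swap12, Sexpr_swap23]; exact Sexpr_pos_sorted T y z x hT hy h3 h2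
      · exact absurd h3 hyz
      · rw [Sexpr_swap12, Sexpr_swap23, Sexpr_swap12]
        exact Sexpr_pos_sorted T z y x hT hz h3 h1
lemma psi0_neg (a₁ a₂ a₃ g₁ g₂ T : ℝ) (ha₁ : 0 < a₁) (ha₂ : 0 < a₂) (ha₃ : 0 < a₃)
    (h₁₂ : a₁ ≠ a₂) (h₁₃ : a₁ ≠ a₃) (h₂₃ : a₂ ≠ a₃)
    (hg₁ : 0 < g₁) (hg₂ : 0 < g₂) (hT : 0 < T) :
    psiF a₁ a₂ a₃ g₁ g₂ T 0 < 0 := by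
  have hS := Sexpr_pos T a₁ a₂ a₃ hT ha₁ ha₂ ha₃ h₁₂ h₁₃ h₂₃
  have hgg : 0 < g₁ * g₂ := mul_pos hg₁ hg₂
  rw [psiF, ccoef, ccoef, ccoef]
  simp only [mul_zero, neg_zero, Real.exp_zero, mul_one]
  rw [Sexpr] at hS
  have key : a₁ * (g₁*g₂/((a₂-a₁)*(a₃-a₁)*(1-Real.exp (-(a₁*T))))) +
      a₂ * (g₁*g₂/((a₁-a₂)*(a₃-a₂)*(1-Real.exp (-(a₂*T))))) +
      a₃ * (g₁*g₂/((a₁-a₃)*(a₂-a₃)*(1-Real.exp (-(a₃*T))))) =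
      (g₁*g₂) * (a₁/((a₂-a₁)*(a₃-a₁)*(1-Real.exp (-(a₁*T)))) +
        a₂/((a₁-a₂)*(a₃-a₂)*(1-Real.exp (-(a₂*T)))) +
        a₃/((a₁-a₃)*(a₂-a₃)*(1-Real.exp (-(a₃*T))))) := by ring
  rw [key]
  have := mul_pos hgg hS
  linarith

lemma exp_shift (a c t : ℝ) : Real.exp (-(a*t)) * Real.exp (c*t) = Real.exp ((c-a)*t) := by
  rw [← Real.exp_add]
  congr 1
  ring

lemma hasDerivAt_exp_mul (c t : ℝ) :
    HasDerivAt (fun t => Real.exp (c*t)) (c*Real.exp (c*t)) t := by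
  have h := (Real.hasDerivAt_exp (c*t)).comp t ((hasDerivAt_id t).const_mul c)
  simpa [Function.comp_def, mul_comm] using h

lemma three_zeros (a₁ a₂ a₃ b₁ b₂ b₃ : ℝ) (h12 : a₁ ≠ a₂) (h13 : a₁ ≠ a₃) (h23 : a₂ ≠ a₃)
    {x y z : ℝ} (hxy : x < y) (hyz : y < z)
    (hfx : b₁*Real.exp (-(a₁*x)) + b₂*Real.exp (-(a₂*x)) + b₃*Real.exp (-(a₃*x)) = 0)
    (hfy : b₁*Real.exp (-(a₁*y)) + b₂*Real.exp (-(a₂*y)) + b₃*Real.exp (-(a₃*y)) = 0)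
    (hfz : b₁*Real.exp (-(a₁*z)) + b₂*Real.exp (-(a₂*z)) + b₃*Real.exp (-(a₃*z)) = 0) :
    b₁ = 0 ∧ b₂ = 0 ∧ b₃ = 0 := by
  have hν1 : a₃ - a₁ ≠ 0 := sub_ne_zero.2 (Ne.symm h13)
  have hν2 : a₃ - a₂ ≠ 0 := sub_ne_zero.2 (Ne.symm h23)
  have hν12 : a₂ - a₁ ≠ 0 := sub_ne_zero.2 (Ne.symm h12)
  set g : ℝ → ℝ := fun t => b₁*Real.exp ((a₃-a₁)*t) + b₂*Real.exp ((a₃-a₂)*t) + b₃ with hgdef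
  have hg : ∀ t, b₁*Real.exp (-(a₁*t)) + b₂*Real.exp (-(a₂*t)) + b₃*Real.exp (-(a₃*t)) = 0 →
      g t = 0 := by
    intro t ht
    have h := mul_eq_zero_of_left ht (Real.exp (a₃*t))
    have expand : (b₁*Real.exp (-(a₁*t)) + b₂*Real.exp (-(a₂*t)) +
        b₃*Real.exp (-(a₃*t)))*Real.exp (a₃*t) = g t := by
      simp only [hgdef, add_mul, mul_assoc, exp_shift]
      norm_num
    rw [expand] at h
    exact h
  set g' : ℝ → ℝ := fun t => b₁*(a₃-a₁)*Real.exp ((a₃-a₁)*t) + b₂*(a₃-a₂)*Real.exp ((a₃-a₂)*t)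
    with hg'def
  have hgD : ∀ t, HasDerivAt g (g' t) t := by
    intro t
    have e1 := hasDerivAt_exp_mul (a₃-a₁) t
    have e2 := hasDerivAt_exp_mul (a₃-a₂) t
    have := ((e1.const_mul b₁).add (e2.const_mul b₂)).add_const b₃
    exact this.congr_deriv (by ring)
  obtain ⟨u, hu, hu0⟩ := exists_hasDerivAt_eq_zero hxy
    (Continuous.continuousOn (by fun_prop)) ((hg x hfx).trans (hg y hfy).symm)
    (fun t _ => hgD t)
  obtain ⟨v, hv, hv0⟩ := exists_hasDerivAt_eq_zero hyz
    (Continuous.continuousOn (by fun_prop)) ((hg y hfy).trans (hg z hfz).symm)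
    (fun t _ => hgD t)
  have huv : u < v := hu.2.trans hv.1
  set h : ℝ → ℝ := fun t => b₁*(a₃-a₁)*Real.exp (((a₃-a₁)-(a₃-a₂))*t) + b₂*(a₃-a₂) with hhdef
  have hh : ∀ t, g' t = 0 → h t = 0 := by
    intro t ht
    have hmul := mul_eq_zero_of_left ht (Real.exp (-((a₃-a₂)*t)))
    have expand : (b₁*(a₃-a₁)*Real.exp ((a₃-a₁)*t) +
        b₂*(a₃-a₂)*Real.exp ((a₃-a₂)*t))*Real.exp (-((a₃-a₂)*t)) = h t := by
      simp only [hhdef, add_mul, mul_assoc]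
      rw [mul_comm (Real.exp ((a₃-a₁)*t)) (Real.exp (-((a₃-a₂)*t))), exp_shift,
        mul_comm (Real.exp ((a₃-a₂)*t)) (Real.exp (-((a₃-a₂)*t))), exp_shift]
      norm_num
    rw [expand] at hmul
    exact hmul
  set h' : ℝ → ℝ := fun t => b₁*(a₃-a₁)*((a₃-a₁)-(a₃-a₂))*Real.exp (((a₃-a₁)-(a₃-a₂))*t)
    with hh'def
  have hhD : ∀ t, HasDerivAt h (h' t) t := by
    intro t
    have e1 := hasDerivAt_exp_mul ((a₃-a₁)-(a₃-a₂)) t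
    have := (e1.const_mul (b₁*(a₃-a₁))).add_const (b₂*(a₃-a₂))
    exact this.congr_deriv (by ring)
  obtain ⟨w, hw, hw0⟩ := exists_hasDerivAt_eq_zero huv
    (Continuous.continuousOn (by fun_prop)) ((hh u hu0).trans (hh v hv0).symm)
    (fun t _ => hhD t)
  have hb1 : b₁ = 0 := by
    have hne : (a₃-a₁)*((a₃-a₁)-(a₃-a₂))*Real.exp (((a₃-a₁)-(a₃-a₂))*w) ≠ 0 := by
      have : (a₃-a₁)-(a₃-a₂) = a₂ - a₁ := by ring
      rw [this]
      exact mul_ne_zero (mul_ne_zero hν1 hν12) (Real.exp_ne_zero _)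
    have : b₁*((a₃-a₁)*((a₃-a₁)-(a₃-a₂))*Real.exp (((a₃-a₁)-(a₃-a₂))*w)) = 0 := by
      rw [← hw0]; simp only [hh'def]; ring
    exact (mul_eq_zero.1 this).resolve_right hne
  have hb2 : b₂ = 0 := by
    have h0 : b₂*(a₃-a₂) = 0 := by simpa [hhdef, hb1] using hh v hv0
    exact (mul_eq_zero.1 h0).resolve_right hν2
  have hb3 : b₃ = 0 := by
    have h0 : b₃*Real.exp (-(a₃*z)) = 0 := by simpa [hb1, hb2] using hfz
    exact (mul_eq_zero.1 h0).resolve_right (Real.exp_ne_zero _)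
  exact ⟨hb1, hb2, hb3⟩

lemma hasDerivAt_exp_neg_mul (a t : ℝ) :
    HasDerivAt (fun t => Real.exp (-(a*t))) (-a*Real.exp (-(a*t))) t := by
  simpa [neg_mul] using hasDerivAt_exp_mul (-a) t

lemma psiF_hasDeriv (a₁ a₂ a₃ g₁ g₂ T τ : ℝ) (c₁ c₂ c₃ : ℝ)
    (h1 : c₁ = ccoef a₁ a₂ a₃ (g₁*g₂) T) (h2 : c₂ = ccoef a₂ a₁ a₃ (g₁*g₂) T)
    (h3 : c₃ = ccoef a₃ a₁ a₂ (g₁*g₂) T) :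
    HasDerivAt (fun τ => c₁ * Real.exp (-(a₁*τ)) + c₂ * Real.exp (-(a₂*τ)) +
      c₃ * Real.exp (-(a₃*τ))) (psiF a₁ a₂ a₃ g₁ g₂ T τ) τ := by
  have e1 := (hasDerivAt_exp_neg_mul a₁ τ).const_mul c₁
  have e2 := (hasDerivAt_exp_neg_mul a₂ τ).const_mul c₂
  have e3 := (hasDerivAt_exp_neg_mul a₃ τ).const_mul c₃
  have := (e1.add e2).add e3
  exact this.congr_deriv (by rw [psiF, h1, h2, h3]; ring)

lemma psiF_period (a₁ a₂ a₃ g₁ g₂ T : ℝ)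
    (h₁₂ : a₁ ≠ a₂) (h₁₃ : a₁ ≠ a₃) (h₂₃ : a₂ ≠ a₃)
    (h1 : 1 - Real.exp (-(a₁*T)) ≠ 0) (h2 : 1 - Real.exp (-(a₂*T)) ≠ 0)
    (h3 : 1 - Real.exp (-(a₃*T)) ≠ 0) :
    psiF a₁ a₂ a₃ g₁ g₂ T T = psiF a₁ a₂ a₃ g₁ g₂ T 0 := by
  have n21 : a₂ - a₁ ≠ 0 := sub_ne_zero.2 (Ne.symm h₁₂)
  have n31 : a₃ - a₁ ≠ 0 := sub_ne_zero.2 (Ne.symm h₁₃)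
  have n32 : a₃ - a₂ ≠ 0 := sub_ne_zero.2 (Ne.symm h₂₃)
  simp only [psiF, ccoef, mul_zero, neg_zero, Real.exp_zero, mul_one]
  rw [show (a₁-a₂)*(a₃-a₂)*(1-Real.exp (-(a₂*T)))
      = -((a₂-a₁)*((a₃-a₂)*(1-Real.exp (-(a₂*T))))) by ring,
    div_neg,
    show (a₁-a₃)*(a₂-a₃)*(1-Real.exp (-(a₃*T)))
      = (a₃-a₁)*((a₃-a₂)*(1-Real.exp (-(a₃*T)))) by ring]
  generalize hE1 : Real.exp (-(a₁*T)) = E1 at h1 ⊢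
  generalize hE2 : Real.exp (-(a₂*T)) = E2 at h2 ⊢
  generalize hE3 : Real.exp (-(a₃*T)) = E3 at h3 ⊢
  field_simp
  ring

lemma zsc_period (a₁ a₂ a₃ g₁ g₂ T : ℝ)
    (h₁₂ : a₁ ≠ a₂) (h₁₃ : a₁ ≠ a₃) (h₂₃ : a₂ ≠ a₃)
    (h1 : 1 - Real.exp (-(a₁*T)) ≠ 0) (h2 : 1 - Real.exp (-(a₂*T)) ≠ 0)
    (h3 : 1 - Real.exp (-(a₃*T)) ≠ 0) :
    ccoef a₁ a₂ a₃ (g₁*g₂) T * Real.exp (-(a₁*T)) +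
    ccoef a₂ a₁ a₃ (g₁*g₂) T * Real.exp (-(a₂*T)) +
    ccoef a₃ a₁ a₂ (g₁*g₂) T * Real.exp (-(a₃*T)) =
    ccoef a₁ a₂ a₃ (g₁*g₂) T * Real.exp (-(a₁*0)) +
    ccoef a₂ a₁ a₃ (g₁*g₂) T * Real.exp (-(a₂*0)) +
    ccoef a₃ a₁ a₂ (g₁*g₂) T * Real.exp (-(a₃*0)) := by
  have n21 : a₂ - a₁ ≠ 0 := sub_ne_zero.2 (Ne.symm h₁₂)
  have n31 : a₃ - a₁ ≠ 0 := sub_ne_zero.2 (Ne.symm h₁₃)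
  have n32 : a₃ - a₂ ≠ 0 := sub_ne_zero.2 (Ne.symm h₂₃)
  simp only [ccoef, mul_zero, neg_zero, Real.exp_zero, mul_one]
  rw [show (a₁-a₂)*(a₃-a₂)*(1-Real.exp (-(a₂*T)))
      = -((a₂-a₁)*((a₃-a₂)*(1-Real.exp (-(a₂*T))))) by ring,
    div_neg,
    show (a₁-a₃)*(a₂-a₃)*(1-Real.exp (-(a₃*T)))
      = (a₃-a₁)*((a₃-a₂)*(1-Real.exp (-(a₃*T)))) by ring]
  generalize hE1 : Real.exp (-(a₁*T)) = E1 at h1 ⊢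
  generalize hE2 : Real.exp (-(a₂*T)) = E2 at h2 ⊢
  generalize hE3 : Real.exp (-(a₃*T)) = E3 at h3 ⊢
  field_simp
  ring

theorem z_two_interior_extrema (a₁ a₂ a₃ g₁ g₂ : ℝ)
    (ha₁ : 0 < a₁) (ha₂ : 0 < a₂) (ha₃ : 0 < a₃)
    (h₁₂ : a₁ ≠ a₂) (h₁₃ : a₁ ≠ a₃) (h₂₃ : a₂ ≠ a₃)
    (hg₁ : 0 < g₁) (hg₂ : 0 < g₂) (T : ℝ) (hT : 0 < T) :
    ∃ τ₁ τ₂ : ℝ, 0 < τ₁ ∧ τ₁ < τ₂ ∧ τ₂ < T ∧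
      {τ : ℝ | τ ∈ Set.Ioo 0 T ∧
        ((NormedSpace.exp (τ • Acas a₁ a₂ a₃ g₁ g₂) *
          (1 - NormedSpace.exp (T • Acas a₁ a₂ a₃ g₁ g₂))⁻¹ *
          Acas a₁ a₂ a₃ g₁ g₂) *ᵥ Bcas) 2 = 0} = {τ₁, τ₂} ∧
      StrictAntiOn (fun τ => zfun a₁ a₂ a₃ g₁ g₂ τ T) (Set.Icc 0 τ₁) ∧
      StrictMonoOn (fun τ => zfun a₁ a₂ a₃ g₁ g₂ τ T) (Set.Icc τ₁ τ₂) ∧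
      StrictAntiOn (fun τ => zfun a₁ a₂ a₃ g₁ g₂ τ T) (Set.Icc τ₂ T) ∧
      IsMinOn (fun τ => zfun a₁ a₂ a₃ g₁ g₂ τ T) (Set.Icc 0 T) τ₁ ∧
      IsMaxOn (fun τ => zfun a₁ a₂ a₃ g₁ g₂ τ T) (Set.Icc 0 T) τ₂ := by
  have hs1 : 1 - Real.exp (-(a₁*T)) ≠ 0 := ne_of_gt (sub_exp_pos T a₁ hT ha₁)
  have hs2 : 1 - Real.exp (-(a₂*T)) ≠ 0 := ne_of_gt (sub_exp_pos T a₂ hT ha₂)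
  have hs3 : 1 - Real.exp (-(a₃*T)) ≠ 0 := ne_of_gt (sub_exp_pos T a₃ hT ha₃)
  have hform : ∀ τ, zfun a₁ a₂ a₃ g₁ g₂ τ T =
      ccoef a₁ a₂ a₃ (g₁*g₂) T * Real.exp (-(a₁*τ)) +
      ccoef a₂ a₁ a₃ (g₁*g₂) T * Real.exp (-(a₂*τ)) +
      ccoef a₃ a₁ a₂ (g₁*g₂) T * Real.exp (-(a₃*τ)) :=
    zfun_formula a₁ a₂ a₃ g₁ g₂ T h₁₂ h₁₃ h₂₃ hs1 hs2 hs3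
  have hderiv : ∀ τ, HasDerivAt (fun τ => zfun a₁ a₂ a₃ g₁ g₂ τ T)
      (psiF a₁ a₂ a₃ g₁ g₂ T τ) τ := by
    intro τ
    exact (psiF_hasDeriv a₁ a₂ a₃ g₁ g₂ T τ _ _ _ rfl rfl rfl).congr_of_eventuallyEq
      (Filter.Eventually.of_forall hform)
  have hψcont : Continuous (psiF a₁ a₂ a₃ g₁ g₂ T) := by
    unfold psiF
    fun_prop
  have hfcont : Continuous (fun τ => zfun a₁ a₂ a₃ g₁ g₂ τ T) := by
    rw [continuous_iff_continuousAt]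
    exact fun τ => (hderiv τ).continuousAt
  have hψ0 : psiF a₁ a₂ a₃ g₁ g₂ T 0 < 0 :=
    psi0_neg a₁ a₂ a₃ g₁ g₂ T ha₁ ha₂ ha₃ h₁₂ h₁₃ h₂₃ hg₁ hg₂ hT
  have hψT : psiF a₁ a₂ a₃ g₁ g₂ T T < 0 := by
    rw [psiF_period a₁ a₂ a₃ g₁ g₂ T h₁₂ h₁₃ h₂₃ hs1 hs2 hs3]
    exact hψ0
  have hfper : zfun a₁ a₂ a₃ g₁ g₂ T T = zfun a₁ a₂ a₃ g₁ g₂ 0 T := by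
    rw [hform T, hform 0]
    exact zsc_period a₁ a₂ a₃ g₁ g₂ T h₁₂ h₁₃ h₂₃ hs1 hs2 hs3
  have hz3 : ∀ p q r : ℝ, p < q → q < r → psiF a₁ a₂ a₃ g₁ g₂ T p = 0 →
      psiF a₁ a₂ a₃ g₁ g₂ T q = 0 → psiF a₁ a₂ a₃ g₁ g₂ T r = 0 → False := by
    intro p q r hpq hqr hp hq hr
    have key : ∀ t, psiF a₁ a₂ a₃ g₁ g₂ T t = 0 →
        (-(a₁*ccoef a₁ a₂ a₃ (g₁*g₂) T))*Real.exp (-(a₁*t)) +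
        (-(a₂*ccoef a₂ a₁ a₃ (g₁*g₂) T))*Real.exp (-(a₂*t)) +
        (-(a₃*ccoef a₃ a₁ a₂ (g₁*g₂) T))*Real.exp (-(a₃*t)) = 0 := by
      intro t ht
      rw [psiF] at ht
      linear_combination ht
    obtain ⟨hb1, hb2, hb3⟩ := three_zeros a₁ a₂ a₃ _ _ _ h₁₂ h₁₃ h₂₃ hpq hqr
      (key p hp) (key q hq) (key r hr)
    have hzero : psiF a₁ a₂ a₃ g₁ g₂ T 0 = 0 := by
      rw [psiF]
      simp only [mul_zero, neg_zero, Real.exp_zero, mul_one]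
      have e1 : a₁*ccoef a₁ a₂ a₃ (g₁*g₂) T = 0 := by linarith [hb1]
      have e2 : a₂*ccoef a₂ a₁ a₃ (g₁*g₂) T = 0 := by linarith [hb2]
      have e3 : a₃*ccoef a₃ a₁ a₂ (g₁*g₂) T = 0 := by linarith [hb3]
      rw [e1, e2, e3]
      ring
    linarith
  have hpos : ∃ s, s ∈ Ioo 0 T ∧ 0 < psiF a₁ a₂ a₃ g₁ g₂ T s := by
    by_contra hcon
    push_neg at hcon
    have hanti : AntitoneOn (fun τ => zfun a₁ a₂ a₃ g₁ g₂ τ T) (Icc 0 T) := by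
      apply antitoneOn_of_deriv_nonpos (convex_Icc 0 T) hfcont.continuousOn
      · intro t ht
        exact (hderiv t).differentiableAt.differentiableWithinAt
      · intro t ht
        rw [interior_Icc] at ht
        rw [(hderiv t).deriv]
        exact hcon t ht
    have hconst : ∀ u ∈ Icc (0:ℝ) T, zfun a₁ a₂ a₃ g₁ g₂ u T = zfun a₁ a₂ a₃ g₁ g₂ 0 T := by
      intro u hu
      have h1 := hanti (left_mem_Icc.2 hT.le) hu hu.1
      have h2 := hanti hu (right_mem_Icc.2 hT.le) hu.2
      simp only [] at h1 h2
      rw [hfper] at h2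
      exact le_antisymm h1 h2
    have hzero : ∀ u, u ∈ Ioo (0:ℝ) T → psiF a₁ a₂ a₃ g₁ g₂ T u = 0 := by
      intro u hu
      have hev : (fun τ => zfun a₁ a₂ a₃ g₁ g₂ τ T) =ᶠ[nhds u]
          (fun _ => zfun a₁ a₂ a₃ g₁ g₂ 0 T) :=
        Filter.eventuallyEq_of_mem (isOpen_Ioo.mem_nhds hu)
          (fun t ht => hconst t (Ioo_subset_Icc_self ht))
      have hD : HasDerivAt (fun τ => zfun a₁ a₂ a₃ g₁ g₂ τ T) 0 u :=
        (hasDerivAt_const u _).congr_of_eventuallyEq hev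
      exact (hderiv u).unique hD
    exact hz3 (T/4) (T/2) (3*T/4) (by linarith) (by linarith)
      (hzero _ ⟨by linarith, by linarith⟩) (hzero _ ⟨by linarith, by linarith⟩)
      (hzero _ ⟨by linarith, by linarith⟩)
  obtain ⟨s, hsmem, hψs⟩ := hpos
  obtain ⟨τ₁, hτ₁mem, hτ₁⟩ := intermediate_value_Ioo hsmem.1.le hψcont.continuousOn
    (show (0:ℝ) ∈ Ioo (psiF a₁ a₂ a₃ g₁ g₂ T 0) (psiF a₁ a₂ a₃ g₁ g₂ T s) from ⟨hψ0, hψs⟩)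
  obtain ⟨τ₂, hτ₂mem, hτ₂⟩ := intermediate_value_Ioo' hsmem.2.le hψcont.continuousOn
    (show (0:ℝ) ∈ Ioo (psiF a₁ a₂ a₃ g₁ g₂ T T) (psiF a₁ a₂ a₃ g₁ g₂ T s) from ⟨hψT, hψs⟩)
  have hτ₁0 : 0 < τ₁ := hτ₁mem.1
  have hτ₁s : τ₁ < s := hτ₁mem.2
  have hsτ₂ : s < τ₂ := hτ₂mem.1
  have hτ₂T : τ₂ < T := hτ₂mem.2
  have hτ₁₂ : τ₁ < τ₂ := hτ₁s.trans hsτ₂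
  have huniq : ∀ t, psiF a₁ a₂ a₃ g₁ g₂ T t = 0 → t = τ₁ ∨ t = τ₂ := by
    intro t ht
    by_contra hcon
    push_neg at hcon
    obtain ⟨hne1, hne2⟩ := hcon
    rcases lt_trichotomy t τ₁ with h | h | h
    · exact hz3 t τ₁ τ₂ h hτ₁₂ ht hτ₁ hτ₂
    · exact hne1 h
    · rcases lt_trichotomy t τ₂ with h' | h' | h'
      · exact hz3 τ₁ t τ₂ h h' hτ₁ ht hτ₂
      · exact hne2 h'
      · exact hz3 τ₁ τ₂ t hτ₁₂ h' hτ₁ hτ₂ ht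
  have hneg1 : ∀ u, 0 ≤ u → u < τ₁ → psiF a₁ a₂ a₃ g₁ g₂ T u < 0 := by
    intro u hu0 huτ
    rcases lt_trichotomy (psiF a₁ a₂ a₃ g₁ g₂ T u) 0 with h | h | h
    · exact h
    · rcases huniq u h with h' | h'
      · exact absurd h' (ne_of_lt huτ)
      · exact absurd h' (ne_of_lt (huτ.trans hτ₁₂))
    · have hu0' : 0 < u := by
        rcases hu0.eq_or_lt with h'' | h''
        · rw [← h''] at h; linarith
        · exact h''
      obtain ⟨w, hwmem, hw⟩ := intermediate_value_Ioo hu0'.le hψcont.continuousOn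
        (show (0:ℝ) ∈ Ioo _ _ from ⟨hψ0, h⟩)
      rcases huniq w hw with h' | h'
      · exact absurd h' (ne_of_lt (hwmem.2.trans huτ))
      · exact absurd h' (ne_of_lt ((hwmem.2.trans huτ).trans hτ₁₂))
  have hpos2 : ∀ u, τ₁ < u → u < τ₂ → 0 < psiF a₁ a₂ a₃ g₁ g₂ T u := by
    intro u h1 h2
    rcases lt_trichotomy (psiF a₁ a₂ a₃ g₁ g₂ T u) 0 with h | h | h
    · rcases lt_trichotomy u s with hus | hus | hus
      · obtain ⟨w, hwmem, hw⟩ := intermediate_value_Ioo hus.le hψcont.continuousOn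
          (show (0:ℝ) ∈ Ioo _ _ from ⟨h, hψs⟩)
        rcases huniq w hw with h' | h'
        · exact absurd h' (ne_of_gt (h1.trans hwmem.1))
        · exact absurd h' (ne_of_lt (hwmem.2.trans hsτ₂))
      · rw [hus] at h; linarith
      · obtain ⟨w, hwmem, hw⟩ := intermediate_value_Ioo' hus.le hψcont.continuousOn
          (show (0:ℝ) ∈ Ioo _ _ from ⟨h, hψs⟩)
        rcases huniq w hw with h' | h'
        · exact absurd h' (ne_of_gt (hτ₁s.trans hwmem.1))
        · exact absurd h' (ne_of_lt (hwmem.2.trans h2))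
    · rcases huniq u h with h' | h'
      · exact absurd h' (ne_of_gt h1)
      · exact absurd h' (ne_of_lt h2)
    · exact h
  have hneg3 : ∀ u, τ₂ < u → u ≤ T → psiF a₁ a₂ a₃ g₁ g₂ T u < 0 := by
    intro u h1 h2
    rcases lt_trichotomy (psiF a₁ a₂ a₃ g₁ g₂ T u) 0 with h | h | h
    · exact h
    · rcases huniq u h with h' | h'
      · exact absurd h' (ne_of_gt (hτ₁₂.trans h1))
      · exact absurd h' (ne_of_gt h1)
    · have huT : u < T := by
        rcases h2.eq_or_lt with h'' | h''
        · rw [h''] at h; linarith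
        · exact h''
      obtain ⟨w, hwmem, hw⟩ := intermediate_value_Ioo' huT.le hψcont.continuousOn
        (show (0:ℝ) ∈ Ioo _ _ from ⟨hψT, h⟩)
      rcases huniq w hw with h' | h'
      · exact absurd h' (ne_of_gt (hτ₁₂.trans (h1.trans hwmem.1)))
      · exact absurd h' (ne_of_gt (h1.trans hwmem.1))
  have hmono1 : StrictAntiOn (fun τ => zfun a₁ a₂ a₃ g₁ g₂ τ T) (Icc 0 τ₁) := by
    apply strictAntiOn_of_deriv_neg (convex_Icc 0 τ₁) hfcont.continuousOn
    intro t ht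
    rw [interior_Icc] at ht
    rw [(hderiv t).deriv]
    exact hneg1 t ht.1.le ht.2
  have hmono2 : StrictMonoOn (fun τ => zfun a₁ a₂ a₃ g₁ g₂ τ T) (Icc τ₁ τ₂) := by
    apply strictMonoOn_of_deriv_pos (convex_Icc τ₁ τ₂) hfcont.continuousOn
    intro t ht
    rw [interior_Icc] at ht
    rw [(hderiv t).deriv]
    exact hpos2 t ht.1 ht.2
  have hmono3 : StrictAntiOn (fun τ => zfun a₁ a₂ a₃ g₁ g₂ τ T) (Icc τ₂ T) := by
    apply strictAntiOn_of_deriv_neg (convex_Icc τ₂ T) hfcont.continuousOn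
    intro t ht
    rw [interior_Icc] at ht
    rw [(hderiv t).deriv]
    exact hneg3 t ht.1 ht.2.le
  refine ⟨τ₁, τ₂, hτ₁0, hτ₁₂, hτ₂T, ?_, hmono1, hmono2, hmono3, ?_, ?_⟩
  · ext t
    simp only [Set.mem_setOf_eq, Set.mem_insert_iff, Set.mem_singleton_iff]
    constructor
    · rintro ⟨hmem, hval⟩
      rw [psi_formula a₁ a₂ a₃ g₁ g₂ T h₁₂ h₁₃ h₂₃ hs1 hs2 hs3 t] at hval
      exact huniq t hval
    · rintro (rfl | rfl)
      · exact ⟨⟨hτ₁0, hτ₁₂.trans hτ₂T⟩,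
          by rw [psi_formula a₁ a₂ a₃ g₁ g₂ T h₁₂ h₁₃ h₂₃ hs1 hs2 hs3]; exact hτ₁⟩
      · exact ⟨⟨hτ₁0.trans hτ₁₂, hτ₂T⟩,
          by rw [psi_formula a₁ a₂ a₃ g₁ g₂ T h₁₂ h₁₃ h₂₃ hs1 hs2 hs3]; exact hτ₂⟩
  · rw [isMinOn_iff]
    intro x hx
    rcases le_or_gt x τ₁ with h | h
    · rcases h.eq_or_lt with h' | h'
      · rw [h']
      · exact (hmono1 ⟨hx.1, h⟩ (right_mem_Icc.2 hτ₁0.le) h').le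
    · rcases le_or_gt x τ₂ with h2 | h2
      · exact (hmono2 (left_mem_Icc.2 hτ₁₂.le) ⟨h.le, h2⟩ h).le
      · have l1 : zfun a₁ a₂ a₃ g₁ g₂ τ₁ T < zfun a₁ a₂ a₃ g₁ g₂ 0 T :=
          hmono1 (left_mem_Icc.2 hτ₁0.le) (right_mem_Icc.2 hτ₁0.le) hτ₁0
        rcases hx.2.eq_or_lt with h'' | h''
        · rw [h'']
          rw [hfper]
          linarith
        · have l2 : zfun a₁ a₂ a₃ g₁ g₂ T T < zfun a₁ a₂ a₃ g₁ g₂ x T :=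
            hmono3 ⟨h2.le, hx.2⟩ (right_mem_Icc.2 (h2.trans h'').le) h''
          rw [hfper] at l2
          linarith
  · rw [isMaxOn_iff]
    intro x hx
    rcases le_or_gt x τ₁ with h | h
    · have l1 : zfun a₁ a₂ a₃ g₁ g₂ T T < zfun a₁ a₂ a₃ g₁ g₂ τ₂ T :=
        hmono3 (left_mem_Icc.2 hτ₂T.le) (right_mem_Icc.2 hτ₂T.le) hτ₂T
      rw [hfper] at l1
      rcases hx.1.eq_or_lt with h' | h'
      · rw [← h']
        linarith
      · have l2 : zfun a₁ a₂ a₃ g₁ g₂ x T < zfun a₁ a₂ a₃ g₁ g₂ 0 T :=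
          hmono1 (left_mem_Icc.2 (h'.le.trans h)) ⟨h'.le, h⟩ h'
        linarith
    · rcases le_or_gt x τ₂ with h2 | h2
      · rcases h2.eq_or_lt with h' | h'
        · rw [h']
        · exact (hmono2 ⟨h.le, h2⟩ (right_mem_Icc.2 hτ₁₂.le) h').le
      · exact (hmono3 (left_mem_Icc.2 hτ₂T.le) ⟨h2.le, hx.2⟩ h2).le
end

section
/- As T → ∞, z(τ,T) = Ce^{Aτ}(I - e^{AT})^{-1}B converges to the impulse response g(τ) = Ce^{Aτ}B uniformly in τ on any compact interval [0,M]. Consequently z_min(T) = z(τ₁(T),T) → 0 and z_max(T) = z(τ₂(T),T) → g(t*) as T → ∞, where t* is the unique maximizer of g. -/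
open Matrix Set Filter

namespace ZP

variable (a₁ a₂ a₃ g₁ g₂ : ℝ)

noncomputable def Pm : Matrix (Fin 3) (Fin 3) ℝ :=
  !![1,0,0; g₁/(a₂-a₁),1,0; g₁*g₂/((a₂-a₁)*(a₃-a₁)), g₂/(a₃-a₂),1]

noncomputable def Pw : Matrix (Fin 3) (Fin 3) ℝ :=
  !![1,0,0; -(g₁/(a₂-a₁)),1,0;
     g₁/(a₂-a₁)*(g₂/(a₃-a₂)) - g₁*g₂/((a₂-a₁)*(a₃-a₁)), -(g₂/(a₃-a₂)),1]

def dv : Fin 3 → ℝ := ![-a₁,-a₂,-a₃]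

noncomputable def cv : Fin 3 → ℝ :=
  ![g₁*g₂/((a₂-a₁)*(a₃-a₁)),
    -(g₂/(a₃-a₂)*(g₁/(a₂-a₁))),
    g₁/(a₂-a₁)*(g₂/(a₃-a₂)) - g₁*g₂/((a₂-a₁)*(a₃-a₁))]

lemma Pm_mul_Pw : Pm a₁ a₂ a₃ g₁ g₂ * Pw a₁ a₂ a₃ g₁ g₂ = 1 := by
  ext i j
  fin_cases i <;> fin_cases j <;>
    simp [Pm, Pw, Matrix.mul_apply, Fin.sum_univ_three, Matrix.one_apply] <;> ring

lemma Pw_mul_Pm : Pw a₁ a₂ a₃ g₁ g₂ * Pm a₁ a₂ a₃ g₁ g₂ = 1 :=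
  mul_eq_one_comm.mp (Pm_mul_Pw a₁ a₂ a₃ g₁ g₂)

lemma isUnit_Pm : IsUnit (Pm a₁ a₂ a₃ g₁ g₂) :=
  ⟨⟨Pm a₁ a₂ a₃ g₁ g₂, Pw a₁ a₂ a₃ g₁ g₂, Pm_mul_Pw a₁ a₂ a₃ g₁ g₂,
    Pw_mul_Pm a₁ a₂ a₃ g₁ g₂⟩, rfl⟩

lemma Pm_inv : (Pm a₁ a₂ a₃ g₁ g₂)⁻¹ = Pw a₁ a₂ a₃ g₁ g₂ :=
  Matrix.inv_eq_right_inv (Pm_mul_Pw a₁ a₂ a₃ g₁ g₂)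

lemma diag_dv : Matrix.diagonal (dv a₁ a₂ a₃) = !![-a₁,0,0; 0,-a₂,0; 0,0,-a₃] := by
  ext i j
  fin_cases i <;> fin_cases j <;> simp [dv, Matrix.diagonal_apply, Matrix.vecHead, Matrix.vecTail]

lemma Acas_eq (h₁₂ : a₁ ≠ a₂) (h₁₃ : a₁ ≠ a₃) (h₂₃ : a₂ ≠ a₃) :
    Acas a₁ a₂ a₃ g₁ g₂ =
      Pm a₁ a₂ a₃ g₁ g₂ * Matrix.diagonal (dv a₁ a₂ a₃) * Pw a₁ a₂ a₃ g₁ g₂ := by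
  have h21 : a₂ - a₁ ≠ 0 := sub_ne_zero.mpr (Ne.symm h₁₂)
  have h31 : a₃ - a₁ ≠ 0 := sub_ne_zero.mpr (Ne.symm h₁₃)
  have h32 : a₃ - a₂ ≠ 0 := sub_ne_zero.mpr (Ne.symm h₂₃)
  have key : Acas a₁ a₂ a₃ g₁ g₂ * Pm a₁ a₂ a₃ g₁ g₂ =
      Pm a₁ a₂ a₃ g₁ g₂ * Matrix.diagonal (dv a₁ a₂ a₃) := by
    rw [diag_dv]
    ext i j
    fin_cases i <;> fin_cases j <;>
      simp [Acas, Pm, Matrix.mul_apply, Fin.sum_univ_three, Matrix.vecHead, Matrix.vecTail] <;>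
      field_simp <;> ring
  calc Acas a₁ a₂ a₃ g₁ g₂
      = Acas a₁ a₂ a₃ g₁ g₂ * (Pm a₁ a₂ a₃ g₁ g₂ * Pw a₁ a₂ a₃ g₁ g₂) := by
        rw [Pm_mul_Pw, mul_one]
    _ = Pm a₁ a₂ a₃ g₁ g₂ * Matrix.diagonal (dv a₁ a₂ a₃) * Pw a₁ a₂ a₃ g₁ g₂ := by
        rw [← mul_assoc, key]

lemma exp_eq (h₁₂ : a₁ ≠ a₂) (h₁₃ : a₁ ≠ a₃) (h₂₃ : a₂ ≠ a₃) (t : ℝ) :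
    NormedSpace.exp (t • Acas a₁ a₂ a₃ g₁ g₂) =
      Pm a₁ a₂ a₃ g₁ g₂ *
        Matrix.diagonal (fun i => Real.exp (t * dv a₁ a₂ a₃ i)) * Pw a₁ a₂ a₃ g₁ g₂ := by
  rw [Acas_eq a₁ a₂ a₃ g₁ g₂ h₁₂ h₁₃ h₂₃]
  have h1 : t • (Pm a₁ a₂ a₃ g₁ g₂ * Matrix.diagonal (dv a₁ a₂ a₃) * Pw a₁ a₂ a₃ g₁ g₂)
      = Pm a₁ a₂ a₃ g₁ g₂ * Matrix.diagonal (fun i => t * dv a₁ a₂ a₃ i) * Pw a₁ a₂ a₃ g₁ g₂ := by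
    rw [← smul_mul_assoc, ← mul_smul_comm, ← Matrix.diagonal_smul]
    rfl
  rw [h1, ← Pm_inv a₁ a₂ a₃ g₁ g₂,
    Matrix.exp_conj _ _ (isUnit_Pm a₁ a₂ a₃ g₁ g₂), Matrix.exp_diagonal]
  have h2 : NormedSpace.exp (fun i => t * dv a₁ a₂ a₃ i)
      = fun i => Real.exp (t * dv a₁ a₂ a₃ i) := by
    rw [Pi.exp_def]
    funext i
    exact (congrFun Real.exp_eq_exp_ℝ _).symm
  rw [h2]

lemma diag3 (v : Fin 3 → ℝ) :
    Matrix.diagonal v = !![v 0,0,0; 0,v 1,0; 0,0,v 2] := by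
  ext i j
  fin_cases i <;> fin_cases j <;> simp [Matrix.diagonal_apply, Matrix.vecHead, Matrix.vecTail]

lemma impResp_eq (h₁₂ : a₁ ≠ a₂) (h₁₃ : a₁ ≠ a₃) (h₂₃ : a₂ ≠ a₃) (t : ℝ) :
    impResp a₁ a₂ a₃ g₁ g₂ t = ∑ i, cv a₁ a₂ a₃ g₁ g₂ i * Real.exp (t * dv a₁ a₂ a₃ i) := by
  rw [impResp, exp_eq a₁ a₂ a₃ g₁ g₂ h₁₂ h₁₃ h₂₃ t, diag3]
  simp [Matrix.mulVec, Matrix.mul_apply, Fin.sum_univ_three, dotProduct,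
    Pm, Pw, cv, dv, Bcas, Matrix.diagonal_apply, Matrix.vecHead, Matrix.vecTail]
  ring

lemma inv_one_sub_exp (h₁₂ : a₁ ≠ a₂) (h₁₃ : a₁ ≠ a₃) (h₂₃ : a₂ ≠ a₃) (T : ℝ)
    (hE : ∀ i, 1 - Real.exp (T * dv a₁ a₂ a₃ i) ≠ 0) :
    (1 - NormedSpace.exp (T • Acas a₁ a₂ a₃ g₁ g₂))⁻¹ =
      Pm a₁ a₂ a₃ g₁ g₂ *
        Matrix.diagonal (fun i => (1 - Real.exp (T * dv a₁ a₂ a₃ i))⁻¹) * Pw a₁ a₂ a₃ g₁ g₂ := by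
  have h0 : (1 : Matrix (Fin 3) (Fin 3) ℝ) - NormedSpace.exp (T • Acas a₁ a₂ a₃ g₁ g₂)
      = Pm a₁ a₂ a₃ g₁ g₂ *
        Matrix.diagonal (fun i => 1 - Real.exp (T * dv a₁ a₂ a₃ i)) * Pw a₁ a₂ a₃ g₁ g₂ := by
    rw [exp_eq a₁ a₂ a₃ g₁ g₂ h₁₂ h₁₃ h₂₃ T]
    have : Matrix.diagonal (fun i => 1 - Real.exp (T * dv a₁ a₂ a₃ i))
        = 1 - Matrix.diagonal (fun i => Real.exp (T * dv a₁ a₂ a₃ i)) := by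
      rw [← Matrix.diagonal_one, Matrix.diagonal_sub]
    rw [this, Matrix.mul_sub, Matrix.sub_mul, Matrix.mul_one, Pm_mul_Pw]
  have hdi : (Matrix.diagonal (fun i => 1 - Real.exp (T * dv a₁ a₂ a₃ i)))⁻¹
      = Matrix.diagonal (fun i => (1 - Real.exp (T * dv a₁ a₂ a₃ i))⁻¹) := by
    apply Matrix.inv_eq_right_inv
    rw [Matrix.diagonal_mul_diagonal, ← Matrix.diagonal_one]
    have : (fun i => (1 - Real.exp (T * dv a₁ a₂ a₃ i)) * (1 - Real.exp (T * dv a₁ a₂ a₃ i))⁻¹)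
        = fun _ : Fin 3 => (1:ℝ) := funext fun i => mul_inv_cancel₀ (hE i)
    rw [this]
  rw [h0, ← Pm_inv a₁ a₂ a₃ g₁ g₂, Matrix.mul_inv_rev, Matrix.mul_inv_rev,
    Matrix.nonsing_inv_nonsing_inv _
      ((Matrix.isUnit_iff_isUnit_det _).mp (isUnit_Pm a₁ a₂ a₃ g₁ g₂)),
    hdi, mul_assoc]

lemma zfun_eq (h₁₂ : a₁ ≠ a₂) (h₁₃ : a₁ ≠ a₃) (h₂₃ : a₂ ≠ a₃) (τ T : ℝ)
    (hE : ∀ i, 1 - Real.exp (T * dv a₁ a₂ a₃ i) ≠ 0) :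
    zfun a₁ a₂ a₃ g₁ g₂ τ T = ∑ i, cv a₁ a₂ a₃ g₁ g₂ i *
      (Real.exp (τ * dv a₁ a₂ a₃ i) * (1 - Real.exp (T * dv a₁ a₂ a₃ i))⁻¹) := by
  rw [zfun, exp_eq a₁ a₂ a₃ g₁ g₂ h₁₂ h₁₃ h₂₃ τ,
    inv_one_sub_exp a₁ a₂ a₃ g₁ g₂ h₁₂ h₁₃ h₂₃ T hE]
  have h0 : Pm a₁ a₂ a₃ g₁ g₂ * Matrix.diagonal (fun i => Real.exp (τ * dv a₁ a₂ a₃ i)) *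
      Pw a₁ a₂ a₃ g₁ g₂ *
      (Pm a₁ a₂ a₃ g₁ g₂ * Matrix.diagonal (fun i => (1 - Real.exp (T * dv a₁ a₂ a₃ i))⁻¹) *
        Pw a₁ a₂ a₃ g₁ g₂)
      = Pm a₁ a₂ a₃ g₁ g₂ * Matrix.diagonal
          (fun i => Real.exp (τ * dv a₁ a₂ a₃ i) * (1 - Real.exp (T * dv a₁ a₂ a₃ i))⁻¹) *
          Pw a₁ a₂ a₃ g₁ g₂ := by
    rw [show ∀ (X D E Y : Matrix (Fin 3) (Fin 3) ℝ), X * D * Y * (X * E * Y) = X * (D * (Y * X) * E) * Y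
      from fun X D E Y => by noncomm_ring, Pw_mul_Pm, Matrix.mul_one,
      Matrix.diagonal_mul_diagonal]
  rw [h0, diag3]
  simp [Matrix.mulVec, Matrix.mul_apply, Fin.sum_univ_three, dotProduct,
    Pm, Pw, cv, dv, Bcas, Matrix.diagonal_apply, Matrix.vecHead, Matrix.vecTail]
  ring

lemma dv_neg (ha₁ : 0 < a₁) (ha₂ : 0 < a₂) (ha₃ : 0 < a₃) :
    ∀ i, dv a₁ a₂ a₃ i < 0 := by
  intro i
  fin_cases i <;> simp [dv, Matrix.vecHead, Matrix.vecTail] <;> linarith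

lemma hE_pos (ha₁ : 0 < a₁) (ha₂ : 0 < a₂) (ha₃ : 0 < a₃) {T : ℝ} (hT : 0 < T) :
    ∀ i, 0 < 1 - Real.exp (T * dv a₁ a₂ a₃ i) := by
  intro i
  have h := mul_neg_of_pos_of_neg hT (dv_neg a₁ a₂ a₃ ha₁ ha₂ ha₃ i)
  have := Real.exp_lt_one_iff.mpr h
  linarith

noncomputable def errF (T : ℝ) : ℝ :=
  ∑ i, |cv a₁ a₂ a₃ g₁ g₂ i| *
    (Real.exp (T * dv a₁ a₂ a₃ i) / (1 - Real.exp (T * dv a₁ a₂ a₃ i)))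

lemma errF_nonneg (ha₁ : 0 < a₁) (ha₂ : 0 < a₂) (ha₃ : 0 < a₃) {T : ℝ} (hT : 0 < T) :
    0 ≤ errF a₁ a₂ a₃ g₁ g₂ T := by
  apply Finset.sum_nonneg
  intro i _
  exact mul_nonneg (abs_nonneg _)
    (div_nonneg (Real.exp_pos _).le (hE_pos a₁ a₂ a₃ ha₁ ha₂ ha₃ hT i).le)

lemma zfun_bound (ha₁ : 0 < a₁) (ha₂ : 0 < a₂) (ha₃ : 0 < a₃)
    (h₁₂ : a₁ ≠ a₂) (h₁₃ : a₁ ≠ a₃) (h₂₃ : a₂ ≠ a₃)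
    {τ T : ℝ} (hτ : 0 ≤ τ) (hT : 0 < T) :
    |zfun a₁ a₂ a₃ g₁ g₂ τ T - impResp a₁ a₂ a₃ g₁ g₂ τ| ≤ errF a₁ a₂ a₃ g₁ g₂ T := by
  have hE := hE_pos a₁ a₂ a₃ ha₁ ha₂ ha₃ hT
  rw [zfun_eq a₁ a₂ a₃ g₁ g₂ h₁₂ h₁₃ h₂₃ τ T (fun i => (hE i).ne'),
    impResp_eq a₁ a₂ a₃ g₁ g₂ h₁₂ h₁₃ h₂₃ τ, ← Finset.sum_sub_distrib, errF]
  refine (Finset.abs_sum_le_sum_abs _ _).trans (Finset.sum_le_sum fun i _ => ?_)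
  have hterm : cv a₁ a₂ a₃ g₁ g₂ i *
        (Real.exp (τ * dv a₁ a₂ a₃ i) * (1 - Real.exp (T * dv a₁ a₂ a₃ i))⁻¹)
      - cv a₁ a₂ a₃ g₁ g₂ i * Real.exp (τ * dv a₁ a₂ a₃ i)
      = cv a₁ a₂ a₃ g₁ g₂ i * (Real.exp (τ * dv a₁ a₂ a₃ i) *
          (Real.exp (T * dv a₁ a₂ a₃ i) / (1 - Real.exp (T * dv a₁ a₂ a₃ i)))) := by
    have hne := (hE i).ne'
    rw [div_eq_mul_inv]
    linear_combination (cv a₁ a₂ a₃ g₁ g₂ i * Real.exp (τ * dv a₁ a₂ a₃ i)) * mul_inv_cancel₀ hne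
  rw [hterm, abs_mul, abs_mul]
  have hq : 0 ≤ Real.exp (T * dv a₁ a₂ a₃ i) / (1 - Real.exp (T * dv a₁ a₂ a₃ i)) :=
    div_nonneg (Real.exp_pos _).le (hE i).le
  rw [abs_of_nonneg (Real.exp_pos (τ * dv a₁ a₂ a₃ i)).le, abs_of_nonneg hq]
  have hle1 : Real.exp (τ * dv a₁ a₂ a₃ i) ≤ 1 :=
    Real.exp_le_one_iff.mpr (mul_nonpos_of_nonneg_of_nonpos hτ
      (dv_neg a₁ a₂ a₃ ha₁ ha₂ ha₃ i).le)
  calc |cv a₁ a₂ a₃ g₁ g₂ i| * (Real.exp (τ * dv a₁ a₂ a₃ i) *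
        (Real.exp (T * dv a₁ a₂ a₃ i) / (1 - Real.exp (T * dv a₁ a₂ a₃ i))))
      ≤ |cv a₁ a₂ a₃ g₁ g₂ i| * (1 *
        (Real.exp (T * dv a₁ a₂ a₃ i) / (1 - Real.exp (T * dv a₁ a₂ a₃ i)))) := by
        gcongr
    _ = |cv a₁ a₂ a₃ g₁ g₂ i| *
        (Real.exp (T * dv a₁ a₂ a₃ i) / (1 - Real.exp (T * dv a₁ a₂ a₃ i))) := by rw [one_mul]

lemma errF_tendsto (ha₁ : 0 < a₁) (ha₂ : 0 < a₂) (ha₃ : 0 < a₃) :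
    Filter.Tendsto (errF a₁ a₂ a₃ g₁ g₂) Filter.atTop (nhds 0) := by
  have h0 : (0:ℝ) = ∑ _i : Fin 3, (0:ℝ) := by simp
  rw [h0]
  apply tendsto_finset_sum
  intro i _
  have h1 : Filter.Tendsto (fun T => Real.exp (T * dv a₁ a₂ a₃ i)) Filter.atTop (nhds 0) := by
    apply Real.tendsto_exp_atBot.comp
    exact Filter.Tendsto.atTop_mul_const_of_neg
      (dv_neg a₁ a₂ a₃ ha₁ ha₂ ha₃ i) Filter.tendsto_id
  have h2 : Filter.Tendsto (fun T => Real.exp (T * dv a₁ a₂ a₃ i) /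
      (1 - Real.exp (T * dv a₁ a₂ a₃ i))) Filter.atTop (nhds 0) := by
    have := h1.div (Filter.Tendsto.const_sub 1 h1) (by norm_num)
    rw [sub_zero, div_one] at this
    exact this
  simpa using h2.const_mul |cv a₁ a₂ a₃ g₁ g₂ i|

end ZP

namespace ZP

noncomputable def Qd (a b c t : ℝ) : ℝ :=
  ((c-b) * Real.exp (-(a*t)) - (c-a) * Real.exp (-(b*t)) + (b-a) * Real.exp (-(c*t))) /
    ((b-a) * ((c-a) * (c-b)))

lemma F_nonneg_sorted {a b c : ℝ} (hab : a < b) (hbc : b < c) (t : ℝ) :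
    0 ≤ (c-b) * Real.exp (-(a*t)) - (c-a) * Real.exp (-(b*t)) + (b-a) * Real.exp (-(c*t)) := by
  have hca : (0:ℝ) < c - a := by linarith
  have hl : (0:ℝ) ≤ (c-b)/(c-a) := div_nonneg (by linarith) hca.le
  have hm : (0:ℝ) ≤ (b-a)/(c-a) := div_nonneg (by linarith) hca.le
  have hs : (c-b)/(c-a) + (b-a)/(c-a) = 1 := by
    rw [← add_div, div_eq_one_iff_eq hca.ne']
    ring
  have hconv := convexOn_exp.2 (Set.mem_univ (-(a*t))) (Set.mem_univ (-(c*t))) hl hm hs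
  simp only [smul_eq_mul] at hconv
  have hpt : (c-b)/(c-a) * (-(a*t)) + (b-a)/(c-a) * (-(c*t)) = -(b*t) := by
    rw [div_mul_eq_mul_div, div_mul_eq_mul_div, ← add_div, div_eq_iff hca.ne']
    ring
  rw [hpt] at hconv
  have h2 : ((c-b) * Real.exp (-(a*t)) + (b-a) * Real.exp (-(c*t))) / (c-a)
      = (c-b)/(c-a) * Real.exp (-(a*t)) + (b-a)/(c-a) * Real.exp (-(c*t)) := by ring
  rw [← h2, le_div_iff₀ hca] at hconv
  nlinarith [hconv]

lemma Qd_nonneg_sorted {a b c : ℝ} (hab : a < b) (hbc : b < c) (t : ℝ) :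
    0 ≤ Qd a b c t :=
  div_nonneg (F_nonneg_sorted hab hbc t)
    (le_of_lt (mul_pos (by linarith) (mul_pos (by linarith) (by linarith))))

lemma Qd_swap12 {a b c : ℝ} (hab : a ≠ b) (hac : a ≠ c) (hbc : b ≠ c) (t : ℝ) :
    Qd a b c t = Qd b a c t := by
  have h1 : b - a ≠ 0 := sub_ne_zero.mpr (Ne.symm hab)
  have h2 : c - a ≠ 0 := sub_ne_zero.mpr (Ne.symm hac)
  have h3 : c - b ≠ 0 := sub_ne_zero.mpr (Ne.symm hbc)
  have h4 : a - b ≠ 0 := sub_ne_zero.mpr hab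
  rw [Qd, Qd, div_eq_div_iff (mul_ne_zero h1 (mul_ne_zero h2 h3))
    (mul_ne_zero h4 (mul_ne_zero h3 h2))]
  ring

lemma Qd_swap23 {a b c : ℝ} (hab : a ≠ b) (hac : a ≠ c) (hbc : b ≠ c) (t : ℝ) :
    Qd a b c t = Qd a c b t := by
  have h1 : b - a ≠ 0 := sub_ne_zero.mpr (Ne.symm hab)
  have h2 : c - a ≠ 0 := sub_ne_zero.mpr (Ne.symm hac)
  have h3 : c - b ≠ 0 := sub_ne_zero.mpr (Ne.symm hbc)
  have h4 : b - c ≠ 0 := sub_ne_zero.mpr hbc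
  rw [Qd, Qd, div_eq_div_iff (mul_ne_zero h1 (mul_ne_zero h2 h3))
    (mul_ne_zero h2 (mul_ne_zero h1 h4))]
  ring

lemma Qd_nonneg {a b c : ℝ} (hab : a ≠ b) (hac : a ≠ c) (hbc : b ≠ c) (t : ℝ) :
    0 ≤ Qd a b c t := by
  rcases lt_or_gt_of_ne hab with h1 | h1 <;>
  rcases lt_or_gt_of_ne hac with h2 | h2 <;>
  rcases lt_or_gt_of_ne hbc with h3 | h3
  · exact Qd_nonneg_sorted h1 h3 t
  · rw [Qd_swap23 hab hac hbc]
    exact Qd_nonneg_sorted h2 h3 t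
  · linarith
  · rw [Qd_swap23 hab hac hbc, Qd_swap12 hac hab hbc.symm]
    exact Qd_nonneg_sorted h2 h1 t
  · rw [Qd_swap12 hab hac hbc]
    exact Qd_nonneg_sorted h1 h2 t
  · linarith
  · rw [Qd_swap12 hab hac hbc, Qd_swap23 hab.symm hbc hac]
    exact Qd_nonneg_sorted h3 h2 t
  · rw [Qd_swap23 hab hac hbc, Qd_swap12 hac hab hbc.symm, Qd_swap23 hac.symm hbc.symm hab]
    exact Qd_nonneg_sorted h3 h1 t


lemma impResp_eq_Qd (a₁ a₂ a₃ g₁ g₂ : ℝ)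
    (h₁₂ : a₁ ≠ a₂) (h₁₃ : a₁ ≠ a₃) (h₂₃ : a₂ ≠ a₃) (t : ℝ) :
    impResp a₁ a₂ a₃ g₁ g₂ t = g₁ * g₂ * Qd a₁ a₂ a₃ t := by
  have h21 : a₂ - a₁ ≠ 0 := sub_ne_zero.mpr (Ne.symm h₁₂)
  have h31 : a₃ - a₁ ≠ 0 := sub_ne_zero.mpr (Ne.symm h₁₃)
  have h32 : a₃ - a₂ ≠ 0 := sub_ne_zero.mpr (Ne.symm h₂₃)
  rw [impResp_eq a₁ a₂ a₃ g₁ g₂ h₁₂ h₁₃ h₂₃ t, Qd]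
  simp only [cv, dv, Fin.sum_univ_three, Matrix.cons_val_zero, Matrix.cons_val_one,
    Matrix.head_cons, Matrix.cons_val_two, Matrix.tail_cons]
  field_simp
  ring_nf

lemma impResp_nonneg (a₁ a₂ a₃ g₁ g₂ : ℝ)
    (h₁₂ : a₁ ≠ a₂) (h₁₃ : a₁ ≠ a₃) (h₂₃ : a₂ ≠ a₃)
    (hg₁ : 0 < g₁) (hg₂ : 0 < g₂) (t : ℝ) :
    0 ≤ impResp a₁ a₂ a₃ g₁ g₂ t := by
  rw [impResp_eq_Qd a₁ a₂ a₃ g₁ g₂ h₁₂ h₁₃ h₂₃ t]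
  exact mul_nonneg (mul_pos hg₁ hg₂).le (Qd_nonneg h₁₂ h₁₃ h₂₃ t)

lemma impResp_zero (a₁ a₂ a₃ g₁ g₂ : ℝ) : impResp a₁ a₂ a₃ g₁ g₂ 0 = 0 := by
  simp [impResp, Bcas, Matrix.vecHead, Matrix.vecTail]

end ZP

theorem z_limits_at_infinity' (a₁ a₂ a₃ g₁ g₂ : ℝ)
    (ha₁ : 0 < a₁) (ha₂ : 0 < a₂) (ha₃ : 0 < a₃)
    (h₁₂ : a₁ ≠ a₂) (h₁₃ : a₁ ≠ a₃) (h₂₃ : a₂ ≠ a₃)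
    (hg₁ : 0 < g₁) (hg₂ : 0 < g₂)
    (τ₁ τ₂ : ℝ → ℝ)
    (hτ₁ : ∀ T : ℝ, 0 < T → τ₁ T ∈ Set.Icc 0 T ∧
      IsMinOn (fun τ => zfun a₁ a₂ a₃ g₁ g₂ τ T) (Set.Icc 0 T) (τ₁ T))
    (hτ₂ : ∀ T : ℝ, 0 < T → τ₂ T ∈ Set.Icc 0 T ∧
      IsMaxOn (fun τ => zfun a₁ a₂ a₃ g₁ g₂ τ T) (Set.Icc 0 T) (τ₂ T))
    (tstar : ℝ) (hstar : 0 < tstar)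
    (hpeak : ∀ t ∈ Set.Ici (0:ℝ), impResp a₁ a₂ a₃ g₁ g₂ t ≤ impResp a₁ a₂ a₃ g₁ g₂ tstar) :
    (∀ M : ℝ, 0 < M →
      TendstoUniformlyOn (fun T τ => zfun a₁ a₂ a₃ g₁ g₂ τ T)
        (impResp a₁ a₂ a₃ g₁ g₂) Filter.atTop (Set.Icc 0 M)) ∧
    Filter.Tendsto (fun T => zfun a₁ a₂ a₃ g₁ g₂ (τ₁ T) T) Filter.atTop (nhds 0) ∧
    Filter.Tendsto (fun T => zfun a₁ a₂ a₃ g₁ g₂ (τ₂ T) T) Filter.atTop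
      (nhds (impResp a₁ a₂ a₃ g₁ g₂ tstar)) := by
  have herr := ZP.errF_tendsto a₁ a₂ a₃ g₁ g₂ ha₁ ha₂ ha₃
  have hbnd : ∀ τ T : ℝ, 0 ≤ τ → 0 < T →
      |zfun a₁ a₂ a₃ g₁ g₂ τ T - impResp a₁ a₂ a₃ g₁ g₂ τ| ≤ ZP.errF a₁ a₂ a₃ g₁ g₂ T :=
    fun τ T h1 h2 => ZP.zfun_bound a₁ a₂ a₃ g₁ g₂ ha₁ ha₂ ha₃ h₁₂ h₁₃ h₂₃ h1 h2
  have hnn : ∀ t : ℝ, 0 ≤ impResp a₁ a₂ a₃ g₁ g₂ t :=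
    fun t => ZP.impResp_nonneg a₁ a₂ a₃ g₁ g₂ h₁₂ h₁₃ h₂₃ hg₁ hg₂ t
  refine ⟨?_, ?_, ?_⟩
  · intro M _
    rw [Metric.tendstoUniformlyOn_iff]
    intro ε hε
    have h1 : ∀ᶠ T in Filter.atTop, ZP.errF a₁ a₂ a₃ g₁ g₂ T < ε :=
      Filter.Tendsto.eventually_lt_const hε herr
    filter_upwards [h1, Filter.eventually_gt_atTop 0] with T hT1 hT2 τ hτ
    rw [Real.dist_eq, abs_sub_comm]
    exact lt_of_le_of_lt (hbnd τ T hτ.1 hT2) hT1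
  · apply tendsto_of_tendsto_of_tendsto_of_le_of_le' (f := fun T => zfun a₁ a₂ a₃ g₁ g₂ (τ₁ T) T)
      (by simpa using herr.neg) herr
    · filter_upwards [Filter.eventually_gt_atTop 0] with T hT
      have h := hτ₁ T hT
      have hb := hbnd (τ₁ T) T h.1.1 hT
      have h1 := (abs_le.mp hb).1
      have := hnn (τ₁ T)
      linarith
    · filter_upwards [Filter.eventually_gt_atTop 0] with T hT
      have h := (hτ₁ T hT).2
      have h0 : zfun a₁ a₂ a₃ g₁ g₂ (τ₁ T) T ≤ zfun a₁ a₂ a₃ g₁ g₂ 0 T :=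
        isMinOn_iff.mp h 0 ⟨le_refl 0, hT.le⟩
      have hb := hbnd 0 T le_rfl hT
      rw [ZP.impResp_zero] at hb
      have h2 := (abs_le.mp hb).2
      linarith
  · apply tendsto_of_tendsto_of_tendsto_of_le_of_le'
      (f := fun T => zfun a₁ a₂ a₃ g₁ g₂ (τ₂ T) T)
      (g := fun T => impResp a₁ a₂ a₃ g₁ g₂ tstar - ZP.errF a₁ a₂ a₃ g₁ g₂ T)
      (h := fun T => impResp a₁ a₂ a₃ g₁ g₂ tstar + ZP.errF a₁ a₂ a₃ g₁ g₂ T)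
      (by simpa using (tendsto_const_nhds (x := impResp a₁ a₂ a₃ g₁ g₂ tstar)).sub herr)
      (by simpa using (tendsto_const_nhds (x := impResp a₁ a₂ a₃ g₁ g₂ tstar)).add herr)
    · filter_upwards [Filter.eventually_gt_atTop tstar] with T hT
      have hTpos : 0 < T := hstar.trans hT
      have h := (hτ₂ T hTpos).2
      have h0 : zfun a₁ a₂ a₃ g₁ g₂ tstar T ≤ zfun a₁ a₂ a₃ g₁ g₂ (τ₂ T) T :=
        isMaxOn_iff.mp h tstar ⟨hstar.le, hT.le⟩
      have hb := hbnd tstar T hstar.le hTpos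
      have h1 := (abs_le.mp hb).1
      linarith
    · filter_upwards [Filter.eventually_gt_atTop tstar] with T hT
      have hTpos : 0 < T := hstar.trans hT
      have hmem := (hτ₂ T hTpos).1
      have hb := hbnd (τ₂ T) T hmem.1 hTpos
      have h2 := (abs_le.mp hb).2
      have h3 := hpeak (τ₂ T) hmem.1
      linarith

theorem z_limits_at_infinity (a₁ a₂ a₃ g₁ g₂ : ℝ)
    (ha₁ : 0 < a₁) (ha₂ : 0 < a₂) (ha₃ : 0 < a₃)
    (h₁₂ : a₁ ≠ a₂) (h₁₃ : a₁ ≠ a₃) (h₂₃ : a₂ ≠ a₃)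
    (hg₁ : 0 < g₁) (hg₂ : 0 < g₂)
    (τ₁ τ₂ : ℝ → ℝ)
    (hτ₁ : ∀ T : ℝ, 0 < T → τ₁ T ∈ Set.Icc 0 T ∧
      IsMinOn (fun τ => zfun a₁ a₂ a₃ g₁ g₂ τ T) (Set.Icc 0 T) (τ₁ T))
    (hτ₂ : ∀ T : ℝ, 0 < T → τ₂ T ∈ Set.Icc 0 T ∧
      IsMaxOn (fun τ => zfun a₁ a₂ a₃ g₁ g₂ τ T) (Set.Icc 0 T) (τ₂ T))
    (tstar : ℝ) (hstar : 0 < tstar)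
    (hpeak : ∀ t ∈ Set.Ici (0:ℝ), impResp a₁ a₂ a₃ g₁ g₂ t ≤ impResp a₁ a₂ a₃ g₁ g₂ tstar)
    (huniq : ∀ t ∈ Set.Ici (0:ℝ),
      (∀ s ∈ Set.Ici (0:ℝ), impResp a₁ a₂ a₃ g₁ g₂ s ≤ impResp a₁ a₂ a₃ g₁ g₂ t) → t = tstar) :
    (∀ M : ℝ, 0 < M →
      TendstoUniformlyOn (fun T τ => zfun a₁ a₂ a₃ g₁ g₂ τ T)
        (impResp a₁ a₂ a₃ g₁ g₂) Filter.atTop (Set.Icc 0 M)) ∧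
    Filter.Tendsto (fun T => zfun a₁ a₂ a₃ g₁ g₂ (τ₁ T) T) Filter.atTop (nhds 0) ∧
    Filter.Tendsto (fun T => zfun a₁ a₂ a₃ g₁ g₂ (τ₂ T) T) Filter.atTop
      (nhds (impResp a₁ a₂ a₃ g₁ g₂ tstar)) := by
  exact z_limits_at_infinity' a₁ a₂ a₃ g₁ g₂ ha₁ ha₂ ha₃ h₁₂ h₁₃ h₂₃ hg₁ hg₂
    τ₁ τ₂ hτ₁ hτ₂ tstar hstar hpeak
end
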